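/- arXiv:2305.12128 — 12 statements merged into one kernel-verified Lean document; each statement's English description precedes it below -/
import Mathlib

section
/- If X is a midconvex subset of an abelian group G (i.e., for all x,y ∈ X, every z ∈ G with 2z = x + y belongs to X), then for every x, y ∈ X, the set Z = {n ∈ ℤ : x + n•(y - x) ∈ X} is order-convex in ℤ (i.e., if k, m ∈ Z and k ≤ n ≤ m, then n ∈ Z). -/
/-- A subset `X` of an additive group is midconvex if whenever `2z = x + y`
with `x, y ∈ X`, also `z ∈ X`. -/
def Midconvex {G : Type*} [AddCommGroup G] (X : Set G) : Prop :=
  ∀ x ∈ X, ∀ y ∈ X, ∀ z : G, 2 • z = x + y → z ∈ X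

lemma midconvex_aux {G : Type*} [AddCommGroup G] (X : Set G) (hX : Midconvex X)
    (x : G) (hx : x ∈ X) (y : G) (hy : y ∈ X) :
    ∀ n : ℕ, ∀ m : ℤ, x + m • (y - x) ∈ X → (n : ℤ) ≤ m →
      x + (n : ℤ) • (y - x) ∈ X := by
  have h0 : x + (0 : ℤ) • (y - x) ∈ X := by simpa using hx
  have h1 : x + (1 : ℤ) • (y - x) ∈ X := by simpa using hy
  have key : ∀ a b c : ℤ, x + a • (y - x) ∈ X → x + b • (y - x) ∈ X →
      a + b = c + c → x + c • (y - x) ∈ X := by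
    intro a b c ha hb h
    apply hX _ ha _ hb
    have hv : a • (y - x) + b • (y - x) = c • (y - x) + c • (y - x) := by
      rw [← add_zsmul, ← add_zsmul, h]
    calc (2 : ℕ) • (x + c • (y - x)) = (x + c • (y - x)) + (x + c • (y - x)) :=
          two_smul _ _
      _ = x + x + (c • (y - x) + c • (y - x)) := by abel
      _ = x + x + (a • (y - x) + b • (y - x)) := by rw [hv]
      _ = (x + a • (y - x)) + (x + b • (y - x)) := by abel
  intro n
  induction n using Nat.strong_induction_on with
  | _ n ih =>
    by_cases h2 : n < 2
    · interval_cases n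
      · intro m _ _; simpa using h0
      · intro m _ _; simpa using h1
    · push_neg at h2
      intro m hm hnm
      have inner : ∀ M : ℕ, ∀ m : ℤ, m.toNat ≤ M → x + m • (y - x) ∈ X →
          (n : ℤ) ≤ m → x + (n : ℤ) • (y - x) ∈ X := by
        intro M
        induction M with
        | zero => intro m hmt _ hnm; omega
        | succ M ihM =>
          intro m hmt hmX hnm
          rcases eq_or_lt_of_le hnm with he | hlt
          · exact he ▸ hmX
          · by_cases hcase : m ≤ 2 * (n : ℤ)
            · have haX := ih (2 * (n : ℤ) - m).toNat (by omega) m hmX (by omega)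
              have hcast : (((2 * (n : ℤ) - m).toNat : ℤ)) = 2 * (n : ℤ) - m := by omega
              rw [hcast] at haX
              exact key _ m _ haX hmX (by ring)
            · have heX : x + (m % 2) • (y - x) ∈ X := by
                rcases Int.emod_two_eq m with h | h <;> rw [h]
                · exact h0
                · exact h1
              have hm'X : x + (m / 2 + m % 2) • (y - x) ∈ X :=
                key (m % 2) m _ heX hmX (by omega)
              exact ihM (m / 2 + m % 2) (by omega) hm'X (by omega)
      exact inner m.toNat m le_rfl hm hnm

theorem stmt_0 {G : Type*} [AddCommGroup G] (X : Set G) (hX : Midconvex X)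
    (x : G) (hx : x ∈ X) (y : G) (hy : y ∈ X) :
    ∀ k ∈ {n : ℤ | x + n • (y - x) ∈ X}, ∀ m ∈ {n : ℤ | x + n • (y - x) ∈ X},
      ∀ n : ℤ, k ≤ n → n ≤ m → n ∈ {n : ℤ | x + n • (y - x) ∈ X} := by
  intro k hk m hm n hkn hnm
  simp only [Set.mem_setOf_eq] at *
  have swap : ∀ a : ℤ, y + (1 - a) • (x - y) = x + a • (y - x) := by
    intro a
    rw [sub_zsmul, one_zsmul]
    have : a • (x - y) = -(a • (y - x)) := by
      rw [← zsmul_neg, neg_sub]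
    rw [this]
    abel
  by_cases hn : 0 ≤ n
  · have := midconvex_aux X hX x hx y hy n.toNat m hm (by omega)
    rwa [show ((n.toNat : ℤ)) = n by omega] at this
  · have hk' : y + (1 - k) • (x - y) ∈ X := by rw [swap]; exact hk
    have := midconvex_aux X hX y hy x hx (1 - n).toNat (1 - k) hk' (by omega)
    rwa [show (((1 - n).toNat : ℤ)) = 1 - n by omega, swap] at this
end

section
/- A subset X of an abelian group G is midconvex if and only if for every g ∈ G and x ∈ X, the set {n ∈ ℤ : x + n•g ∈ X} equals C ∩ H for some order-convex set C ⊆ ℤ and some subgroup H ⊆ ℤ such that the quotient group ℤ/H has no elements of even order (no nonzero element whose order is even). -/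
/-- A set of integers is order-convex. -/
def OrderConvexZ (C : Set ℤ) : Prop :=
  ∀ k ∈ C, ∀ m ∈ C, ∀ n : ℤ, k ≤ n → n ≤ m → n ∈ C

namespace MidAux

lemma mid2 {S : Set ℤ} (hS : Midconvex S) {x y z : ℤ} (hx : x ∈ S) (hy : y ∈ S)
    (h : x + y = z + z) : z ∈ S :=
  hS x hx y hy z (by rw [two_nsmul]; omega)

lemma one_le_two_pow' (w : ℕ) : (1:ℤ) ≤ 2 ^ w := by
  have := pow_pos (show (0:ℤ) < 2 by norm_num) w; omega

lemma prog {S : Set ℤ} (hS : Midconvex S) :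
    ∀ (v : ℕ) (m a : ℤ), a ∈ S → a + 2 ^ v * m ∈ S →
      ∀ j : ℤ, 0 ≤ j → j ≤ 2 ^ v → a + j * m ∈ S := by
  intro v
  induction v with
  | zero =>
    intro m a ha hb j hj0 hj1
    simp only [pow_zero, one_mul] at hj1 hb
    rcases (show j = 0 ∨ j = 1 by omega) with h | h <;> subst h
    · simpa using ha
    · simpa using hb
  | succ v ih =>
    intro m a ha hb j hj0 hj1
    have hmid : a + 2 ^ v * m ∈ S := by
      refine mid2 hS ha hb ?_
      rw [pow_succ]; ring
    by_cases hj : j ≤ 2 ^ v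
    · exact ih m a ha hmid j hj0 hj
    · have hb' : (a + 2 ^ v * m) + 2 ^ v * m ∈ S := by
        have e : (a + 2 ^ v * m) + 2 ^ v * m = a + 2 ^ (v+1) * m := by rw [pow_succ]; ring
        rw [e]; exact hb
      have h := ih m (a + 2 ^ v * m) hmid hb' (j - 2 ^ v) (by omega) (by omega)
      have e : (a + 2 ^ v * m) + (j - 2 ^ v) * m = a + j * m := by ring
      rwa [e] at h

lemma oddpart (t : ℤ) (ht : 0 < t) : ∃ (w : ℕ) (μ : ℤ), Odd μ ∧ 0 < μ ∧ t = 2 ^ w * μ := by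
  obtain ⟨k, m, hm, he⟩ := Nat.exists_eq_two_pow_mul_odd (n := t.toNat) (by omega)
  refine ⟨k, (m:ℤ), by exact_mod_cast hm, by exact_mod_cast hm.pos, ?_⟩
  have ht' : ((t.toNat : ℕ) : ℤ) = t := Int.toNat_of_nonneg ht.le
  rw [← ht', he]
  push_cast
  ring

lemma odd_pair_of_lt {S : Set ℤ} (hS : Midconvex S) {a b : ℤ} (ha : a ∈ S) (hb : b ∈ S)
    (hab : a < b) : ∃ (w : ℕ) (μ : ℤ), Odd μ ∧ 0 < μ ∧ b - a = 2 ^ w * μ ∧ a + μ ∈ S := by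
  obtain ⟨w, μ, h1, h2, h3⟩ := oddpart (b - a) (by omega)
  have hb' : a + 2 ^ w * μ ∈ S := by
    have e : a + 2 ^ w * μ = b := by linarith
    rw [e]; exact hb
  exact ⟨w, μ, h1, h2, h3, by
    simpa using prog hS w μ a ha hb' 1 (by norm_num) (one_le_two_pow' w)⟩

lemma d_odd {S : Set ℤ} (hS : Midconvex S) {d c : ℤ} (hd0 : 0 < d) (hc : c ∈ S)
    (hcd : c + d ∈ S)
    (hmin : ∀ δ : ℤ, 0 < δ → (∃ u, u ∈ S ∧ u + δ ∈ S) → d ≤ δ) : Odd d := by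
  obtain ⟨w, μ, h1, h2, h3, h4⟩ := odd_pair_of_lt hS hc hcd (by omega)
  have hle : d ≤ μ := hmin μ h2 ⟨c, hc, h4⟩
  have h1w := one_le_two_pow' w
  have hμd : μ ≤ d := by
    have : μ ≤ 2 ^ w * μ := le_mul_of_one_le_left h2.le h1w
    linarith
  have : μ = d := le_antisymm hμd hle
  rwa [this] at h1

lemma dvd_pairs {S : Set ℤ} (hS : Midconvex S) {d c : ℤ} (hd0 : 0 < d) (hdo : Odd d)
    (hc : c ∈ S) (hcd : c + d ∈ S)
    (hmin : ∀ δ : ℤ, 0 < δ → (∃ u, u ∈ S ∧ u + δ ∈ S) → d ≤ δ) :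
    ∀ (k : ℕ) (m : ℤ), Odd m → 0 < m → m.toNat ≤ k → (∃ u, u ∈ S ∧ u + m ∈ S) → d ∣ m := by
  obtain ⟨s, hs⟩ := hdo
  intro k
  induction k with
  | zero => intro m _ hm hk _; omega
  | succ k ih =>
    rintro m hmo hm hk ⟨u, hu, hum⟩
    have hdm : d ≤ m := hmin m hm ⟨u, hu, hum⟩
    rcases eq_or_lt_of_le hdm with he | hlt
    · rw [← he]
    · obtain ⟨r, hr⟩ := hmo
      rcases Int.even_or_odd (u + c) with ⟨p, hp⟩ | ⟨p, hp⟩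
      · have hpS : p ∈ S := mid2 hS hu hc (by omega)
        have hqS : p + r + s + 1 ∈ S := mid2 hS hum hcd (by omega)
        obtain ⟨w, μ, h1, h2, h3, h4⟩ := odd_pair_of_lt hS hpS hqS (by omega)
        have h1w := one_le_two_pow' w
        have hμe : μ ≤ 2 ^ w * μ := le_mul_of_one_le_left h2.le h1w
        have hμm : μ < m := by linarith
        have hdμ : d ∣ μ := ih μ h1 h2 (by omega) ⟨p, hpS, h4⟩
        have he2 : m = 2 * (2 ^ w * μ) - d := by linarith
        rw [he2]
        exact dvd_sub ((hdμ.mul_left ((2:ℤ)^w)).mul_left 2) dvd_rfl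
      · have hxS : p + s + 1 ∈ S := mid2 hS hu hcd (by omega)
        have hyS : p + r + 1 ∈ S := mid2 hS hum hc (by omega)
        obtain ⟨w, μ, h1, h2, h3, h4⟩ := odd_pair_of_lt hS hxS hyS (by omega)
        have h1w := one_le_two_pow' w
        have hμe : μ ≤ 2 ^ w * μ := le_mul_of_one_le_left h2.le h1w
        have hμm : μ < m := by linarith
        have hdμ : d ∣ μ := ih μ h1 h2 (by omega) ⟨_, hxS, h4⟩
        have he2 : m = 2 * (2 ^ w * μ) + d := by linarith
        rw [he2]
        exact dvd_add ((hdμ.mul_left ((2:ℤ)^w)).mul_left 2) dvd_rfl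

lemma dvd_diff {S : Set ℤ} (hS : Midconvex S) {d c : ℤ} (hd0 : 0 < d) (hdo : Odd d)
    (hc : c ∈ S) (hcd : c + d ∈ S)
    (hmin : ∀ δ : ℤ, 0 < δ → (∃ u, u ∈ S ∧ u + δ ∈ S) → d ≤ δ) :
    ∀ a ∈ S, ∀ b ∈ S, d ∣ b - a := by
  have key : ∀ a ∈ S, ∀ b ∈ S, a < b → d ∣ b - a := by
    intro a ha b hb hab
    obtain ⟨w, μ, h1, h2, h3, h4⟩ := odd_pair_of_lt hS ha hb hab
    have hdμ := dvd_pairs hS hd0 hdo hc hcd hmin μ.toNat μ h1 h2 le_rfl ⟨a, ha, h4⟩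
    rw [h3]
    exact hdμ.mul_left _
  intro a ha b hb
  rcases lt_trichotomy a b with h | h | h
  · exact key a ha b hb h
  · simp [h]
  · have h' := key b hb a ha h
    have e : b - a = -(a - b) := by ring
    rw [e]
    exact dvd_neg.mpr h'

lemma step {S : Set ℤ} (hS : Midconvex S) {a b : ℤ} (ha : a ∈ S) (hb : b ∈ S)
    (hgap : ∀ n ∈ S, ¬(a < n ∧ n < b)) {s' : ℤ} (hm : b - a = 2 * s' + 1)
    {u δ : ℤ} (hu : u ∈ S) (huδ : u + δ ∈ S) (hδo : Odd δ) (hδ0 : 0 < δ)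
    (hδlt : δ < b - a) (htop : u + δ ≤ a) :
    ∃ u' δ', u' ∈ S ∧ u' + δ' ∈ S ∧ Odd δ' ∧ 0 < δ' ∧ δ' < b - a ∧ u' + δ' ≤ a ∧
      u + δ < u' + δ' := by
  obtain ⟨r, hr⟩ := hδo
  rcases Int.even_or_odd (u + b) with ⟨x, hx⟩ | ⟨t, ht⟩
  · have hxS : x ∈ S := mid2 hS hu hb (by omega)
    have hxa : x ≤ a := by
      by_contra hcon
      exact hgap x hxS ⟨by omega, by omega⟩
    have hyS : x + r - s' ∈ S := mid2 hS huδ ha (by omega)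
    obtain ⟨w, μ, h1, h2, h3, _⟩ := odd_pair_of_lt hS hyS hxS (by omega)
    have h1w := one_le_two_pow' w
    have hμe : μ ≤ 2 ^ w * μ := le_mul_of_one_le_left h2.le h1w
    have hbmem : (x + r - s') + 2 ^ w * μ ∈ S := by
      have e : (x + r - s') + 2 ^ w * μ = x := by linarith
      rw [e]; exact hxS
    have hp1 : (x + r - s') + (2 ^ w - 1) * μ ∈ S :=
      prog hS w μ _ hyS hbmem (2 ^ w - 1) (by omega) (by omega)
    have e2 : (x + r - s') + (2 ^ w - 1) * μ = x - μ := by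
      rw [sub_mul, one_mul]; linarith
    rw [e2] at hp1
    refine ⟨x - μ, μ, hp1, ?_, h1, h2, by linarith, by omega, by omega⟩
    have e3 : x - μ + μ = x := by ring
    rw [e3]; exact hxS
  · have hxS : t - s' ∈ S := mid2 hS hu ha (by omega)
    have hyS : t + r + 1 ∈ S := mid2 hS huδ hb (by omega)
    have hya : t + r + 1 ≤ a := by
      by_contra hcon
      exact hgap _ hyS ⟨by omega, by omega⟩
    obtain ⟨w, μ, h1, h2, h3, _⟩ := odd_pair_of_lt hS hxS hyS (by omega)
    have h1w := one_le_two_pow' w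
    have hμe : μ ≤ 2 ^ w * μ := le_mul_of_one_le_left h2.le h1w
    have hbmem : (t - s') + 2 ^ w * μ ∈ S := by
      have e : (t - s') + 2 ^ w * μ = t + r + 1 := by linarith
      rw [e]; exact hyS
    have hp1 : (t - s') + (2 ^ w - 1) * μ ∈ S :=
      prog hS w μ _ hxS hbmem (2 ^ w - 1) (by omega) (by omega)
    have e2 : (t - s') + (2 ^ w - 1) * μ = (t + r + 1) - μ := by
      rw [sub_mul, one_mul]; linarith
    rw [e2] at hp1
    refine ⟨(t + r + 1) - μ, μ, hp1, ?_, h1, h2, by linarith, by omega, by omega⟩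
    have e3 : (t + r + 1) - μ + μ = t + r + 1 := by ring
    rw [e3]; exact hyS

lemma desc {S : Set ℤ} (hS : Midconvex S) {a b : ℤ} (ha : a ∈ S) (hb : b ∈ S)
    (hgap : ∀ n ∈ S, ¬(a < n ∧ n < b)) {s' : ℤ} (hm : b - a = 2 * s' + 1) :
    ∀ (k : ℕ) (u δ : ℤ), u ∈ S → u + δ ∈ S → Odd δ → 0 < δ → δ < b - a → u + δ ≤ a →
      (a - (u + δ)).toNat ≤ k → False := by
  intro k
  induction k with
  | zero =>
    intro u δ hu huδ hδo hδ0 hδlt htop hk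
    obtain ⟨u', δ', _, _, _, _, _, h7, h8⟩ := step hS ha hb hgap hm hu huδ hδo hδ0 hδlt htop
    omega
  | succ k ih =>
    intro u δ hu huδ hδo hδ0 hδlt htop hk
    obtain ⟨u', δ', h1, h2, h3, h4, h5, h6, h7⟩ := step hS ha hb hgap hm hu huδ hδo hδ0 hδlt htop
    exact ih u' δ' h1 h2 h3 h4 h5 h6 (by omega)

lemma midconvex_reflect {S : Set ℤ} (hS : Midconvex S) (t : ℤ) :
    Midconvex ((fun n => t - n) ⁻¹' S) := by
  intro x hx y hy z hz
  rw [two_nsmul] at hz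
  have hx' : t - x ∈ S := hx
  have hy' : t - y ∈ S := hy
  show t - z ∈ S
  exact mid2 hS hx' hy' (by omega)

lemma nogap {S : Set ℤ} (hS : Midconvex S) {a b c d : ℤ} (ha : a ∈ S) (hb : b ∈ S)
    (hab : a < b) (hgap : ∀ n ∈ S, ¬(a < n ∧ n < b)) (hc : c ∈ S) (hcd : c + d ∈ S)
    (hdo : Odd d) (hd0 : 0 < d) (hlt : d < b - a) : False := by
  rcases Int.even_or_odd (b - a) with ⟨s, hs⟩ | ⟨s', hm⟩
  · exact hgap (a + s) (mid2 hS ha hb (by omega)) ⟨by omega, by omega⟩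
  · have hcpos : c ≤ a ∨ b ≤ c := by
      by_contra hcon; push_neg at hcon
      exact hgap c hc ⟨by omega, by omega⟩
    have hcdpos : c + d ≤ a ∨ b ≤ c + d := by
      by_contra hcon; push_neg at hcon
      exact hgap (c + d) hcd ⟨by omega, by omega⟩
    rcases hcdpos with h1 | h1
    · exact desc hS ha hb hgap hm (a - (c + d)).toNat c d hc hcd hdo hd0 hlt h1 le_rfl
    · rcases hcpos with h2 | h2
      · omega
      · have hS' := midconvex_reflect hS (a + b)
        have ha' : a ∈ (fun n => (a + b) - n) ⁻¹' S := by
          show (a + b) - a ∈ S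
          have e : (a + b) - a = b := by ring
          rw [e]; exact hb
        have hb' : b ∈ (fun n => (a + b) - n) ⁻¹' S := by
          show (a + b) - b ∈ S
          have e : (a + b) - b = a := by ring
          rw [e]; exact ha
        have hgap' : ∀ n ∈ (fun n => (a + b) - n) ⁻¹' S, ¬(a < n ∧ n < b) := by
          rintro n hn ⟨hn1, hn2⟩
          have hn' : (a + b) - n ∈ S := hn
          exact hgap _ hn' ⟨by omega, by omega⟩
        have hc1 : (a + b - c - d) ∈ (fun n => (a + b) - n) ⁻¹' S := by
          show (a + b) - (a + b - c - d) ∈ S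
          have e : (a + b) - (a + b - c - d) = c + d := by ring
          rw [e]; exact hcd
        have hc2 : (a + b - c - d) + d ∈ (fun n => (a + b) - n) ⁻¹' S := by
          show (a + b) - ((a + b - c - d) + d) ∈ S
          have e : (a + b) - ((a + b - c - d) + d) = c := by ring
          rw [e]; exact hc
        exact desc hS' ha' hb' hgap' hm (a - ((a + b - c - d) + d)).toNat _ d hc1 hc2 hdo hd0
          hlt (by omega) le_rfl

lemma consec {S : Set ℤ} (hS : Midconvex S) {d c : ℤ} (hd0 : 0 < d) (hdo : Odd d)
    (hc : c ∈ S) (hcd : c + d ∈ S)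
    (hmin : ∀ δ : ℤ, 0 < δ → (∃ u, u ∈ S ∧ u + δ ∈ S) → d ≤ δ)
    {a b : ℤ} (ha : a ∈ S) (hb : b ∈ S) (hab : a < b)
    (hgap : ∀ n ∈ S, ¬(a < n ∧ n < b)) : b - a = d := by
  have hdvd : d ∣ b - a := dvd_diff hS hd0 hdo hc hcd hmin a ha b hb
  have hle : d ≤ b - a := Int.le_of_dvd (by omega) hdvd
  rcases eq_or_lt_of_le hle with h | h
  · omega
  · exact (nogap hS ha hb hab hgap hc hcd hdo hd0 h).elim

lemma fill {S : Set ℤ} (hS : Midconvex S) {d c : ℤ} (hd0 : 0 < d) (hdo : Odd d)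
    (hc : c ∈ S) (hcd : c + d ∈ S)
    (hmin : ∀ δ : ℤ, 0 < δ → (∃ u, u ∈ S ∧ u + δ ∈ S) → d ≤ δ) :
    ∀ (k : ℕ) (a b n : ℤ), a ∈ S → b ∈ S → a ≤ n → n ≤ b → d ∣ n - a →
      (n - a).toNat ≤ k → n ∈ S := by
  intro k
  induction k with
  | zero =>
    intro a b n ha hb h1 h2 h3 hk
    have : n = a := by omega
    rwa [this]
  | succ k ih =>
    intro a b n ha hb h1 h2 h3 hk
    rcases eq_or_lt_of_le h1 with he | hlt
    · rwa [← he]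
    · classical
      have hTne : ∃ j : ℕ, 0 < j ∧ a + (j:ℤ) ∈ S := by
        refine ⟨(b - a).toNat, by omega, ?_⟩
        have e : a + (((b - a).toNat : ℕ) : ℤ) = b := by omega
        rw [e]; exact hb
      obtain ⟨hj0pos, hj0mem⟩ := Nat.find_spec hTne
      have hgap : ∀ y ∈ S, ¬(a < y ∧ y < a + ((Nat.find hTne : ℕ):ℤ)) := by
        rintro y hy ⟨hy1, hy2⟩
        have hlt' : (y - a).toNat < Nat.find hTne := by omega
        refine Nat.find_min hTne hlt' ⟨by omega, ?_⟩
        have e : a + (((y - a).toNat : ℕ) : ℤ) = y := by omega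
        rw [e]; exact hy
      have hcons : (a + ((Nat.find hTne : ℕ):ℤ)) - a = d :=
        consec hS hd0 hdo hc hcd hmin ha hj0mem (by omega) hgap
      have had : a + d ∈ S := by
        have e : a + d = a + ((Nat.find hTne : ℕ):ℤ) := by omega
        rw [e]; exact hj0mem
      have hge : a + d ≤ n := by
        have := Int.le_of_dvd (by omega) h3
        omega
      refine ih (a + d) b n had hb hge h2 ?_ (by omega)
      have e : n - (a + d) = (n - a) - d := by ring
      rw [e]; exact dvd_sub h3 dvd_rfl

lemma qsat (H : AddSubgroup ℤ) (h2 : ∀ n : ℤ, 2 * n ∈ H → n ∈ H) :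
    ∀ q : ℤ ⧸ H, addOrderOf q ≠ 0 → ¬ Even (addOrderOf q) := by
  intro q hq hev
  obtain ⟨r, hr⟩ := hev
  have hrpos : 0 < r := by omega
  have h2p : 2 • (r • q) = 0 := by
    rw [smul_smul]
    have e : 2 * r = addOrderOf q := by omega
    rw [e, addOrderOf_nsmul_eq_zero]
  have hpne : r • q ≠ 0 := by
    intro h0
    have hdvd : addOrderOf q ∣ r := addOrderOf_dvd_iff_nsmul_eq_zero.mpr h0
    have := Nat.le_of_dvd hrpos hdvd
    omega
  obtain ⟨n, hn⟩ := QuotientAddGroup.mk_surjective (r • q)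
  apply hpne
  rw [← hn] at h2p ⊢
  have hmap : (2:ℕ) • (QuotientAddGroup.mk n : ℤ ⧸ H) =
      QuotientAddGroup.mk ((2:ℕ) • n) := (map_nsmul (QuotientAddGroup.mk' H) 2 n).symm
  rw [hmap] at h2p
  have hmem : ((2:ℕ) • n) ∈ H := (QuotientAddGroup.eq_zero_iff _).mp h2p
  have e : (2:ℕ) • n = 2 * n := by
    rw [nsmul_eq_mul]; push_cast; ring
  rw [e] at hmem
  exact (QuotientAddGroup.eq_zero_iff _).mpr (h2 n hmem)

end MidAux

theorem stmt_1 {G : Type*} [AddCommGroup G] (X : Set G) :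
    Midconvex X ↔
      ∀ g : G, ∀ x ∈ X, ∃ (C : Set ℤ) (H : AddSubgroup ℤ),
        OrderConvexZ C ∧
        (∀ q : ℤ ⧸ H, addOrderOf q ≠ 0 → ¬ Even (addOrderOf q)) ∧
        {n : ℤ | x + n • g ∈ X} = C ∩ (H : Set ℤ) := by
  classical
  constructor
  · intro hX g x hx
    set S : Set ℤ := {n : ℤ | x + n • g ∈ X} with hSdef
    have h0 : (0:ℤ) ∈ S := by
      show x + (0:ℤ) • g ∈ X
      simpa using hx
    have hS : Midconvex S := by
      intro m hm n hn z hz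
      rw [two_nsmul] at hz
      show x + z • g ∈ X
      refine hX _ hm _ hn _ ?_
      rw [two_nsmul]
      calc (x + z • g) + (x + z • g) = (x + x) + (z + z) • g := by rw [add_zsmul]; abel
        _ = (x + x) + (m + n) • g := by rw [hz]
        _ = (x + m • g) + (x + n • g) := by rw [add_zsmul]; abel
    by_cases hZ : ∀ s ∈ S, s = 0
    · refine ⟨{0}, ⊥, ?_, ?_, ?_⟩
      · intro k hk m hm n h1 h2
        simp only [Set.mem_singleton_iff] at hk hm ⊢
        omega
      · refine MidAux.qsat ⊥ ?_
        intro n hn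
        simp only [AddSubgroup.mem_bot] at hn ⊢
        omega
      · ext n
        simp only [Set.mem_inter_iff, Set.mem_singleton_iff, SetLike.mem_coe,
          AddSubgroup.mem_bot]
        constructor
        · intro hn
          have := hZ n hn
          exact ⟨this, this⟩
        · rintro ⟨rfl, -⟩
          exact h0
    · push_neg at hZ
      obtain ⟨s, hsS, hs0⟩ := hZ
      have hpair : ∃ k : ℕ, 0 < k ∧ ∃ u, u ∈ S ∧ u + (k:ℤ) ∈ S := by
        rcases lt_or_gt_of_ne hs0 with h | h
        · refine ⟨(-s).toNat, by omega, s, hsS, ?_⟩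
          have e : s + (((-s).toNat : ℕ):ℤ) = 0 := by omega
          rw [e]; exact h0
        · refine ⟨s.toNat, by omega, 0, h0, ?_⟩
          have e : (0:ℤ) + ((s.toNat : ℕ):ℤ) = s := by omega
          rw [e]; exact hsS
      obtain ⟨hk0pos, c, hcS, hcdS⟩ := Nat.find_spec hpair
      set d : ℤ := ((Nat.find hpair : ℕ) : ℤ) with hd
      have hd0 : 0 < d := by
        simp only [hd]
        exact_mod_cast hk0pos
      have hmin : ∀ δ : ℤ, 0 < δ → (∃ u, u ∈ S ∧ u + δ ∈ S) → d ≤ δ := by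
        rintro δ hδ ⟨u, hu1, hu2⟩
        have : Nat.find hpair ≤ δ.toNat := by
          refine Nat.find_min' hpair ⟨by omega, u, hu1, ?_⟩
          have e : u + ((δ.toNat : ℕ):ℤ) = u + δ := by omega
          rw [e]; exact hu2
        omega
      have hdo : Odd d := MidAux.d_odd hS hd0 hcS hcdS hmin
      refine ⟨{n | ∃ p ∈ S, ∃ q ∈ S, p ≤ n ∧ n ≤ q}, AddSubgroup.zmultiples d, ?_, ?_, ?_⟩
      · rintro k ⟨p, hp, q, hq, h1, h2⟩ m ⟨p', hp', q', hq', h3, h4⟩ n hn1 hn2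
        exact ⟨p, hp, q', hq', by omega, by omega⟩
      · refine MidAux.qsat _ ?_
        intro n hn
        rw [Int.mem_zmultiples_iff] at hn ⊢
        obtain ⟨s0, hs0⟩ := hdo
        obtain ⟨t, ht⟩ := hn
        exact ⟨(s0 + 1) * t - n, by linear_combination (s0 + 1) * ht + n * hs0⟩
      · ext n
        simp only [Set.mem_inter_iff, Set.mem_setOf_eq, SetLike.mem_coe,
          Int.mem_zmultiples_iff]
        constructor
        · intro hn
          refine ⟨⟨n, hn, n, hn, le_rfl, le_rfl⟩, ?_⟩
          have := MidAux.dvd_diff hS hd0 hdo hcS hcdS hmin 0 h0 n hn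
          simpa using this
        · rintro ⟨⟨p, hp, q, hq, h1, h2⟩, hdvd⟩
          have hdp : d ∣ p := by
            simpa using MidAux.dvd_diff hS hd0 hdo hcS hcdS hmin 0 h0 p hp
          exact MidAux.fill hS hd0 hdo hcS hcdS hmin (n - p).toNat p q n hp hq h1 h2
            (by
              have e : n - p = (n - 0) - (p - 0) := by ring
              exact dvd_sub hdvd hdp) le_rfl
  · intro h x hx y hy z hz
    obtain ⟨C, H, hC, hH, hset⟩ := h (z - x) x hx
    have h0 : (0:ℤ) ∈ C ∩ H := by
      rw [← hset]
      show x + (0:ℤ) • (z - x) ∈ X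
      simpa using hx
    have h2 : (2:ℤ) ∈ C ∩ H := by
      rw [← hset]
      show x + (2:ℤ) • (z - x) ∈ X
      have e : x + (2:ℤ) • (z - x) = y := by
        rw [two_zsmul]
        rw [two_nsmul] at hz
        calc x + (z - x + (z - x)) = z + z - x := by abel
          _ = (x + y) - x := by rw [hz]
          _ = y := by abel
      rw [e]; exact hy
    have h1H : (1:ℤ) ∈ H := by
      by_contra hcon
      have hq0 : (QuotientAddGroup.mk (1:ℤ) : ℤ ⧸ H) ≠ 0 := by
        intro h'
        exact hcon ((QuotientAddGroup.eq_zero_iff _).mp h')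
      have h2q : (2:ℕ) • (QuotientAddGroup.mk (1:ℤ) : ℤ ⧸ H) = 0 := by
        have hmap : (2:ℕ) • (QuotientAddGroup.mk (1:ℤ) : ℤ ⧸ H) =
            QuotientAddGroup.mk ((2:ℕ) • (1:ℤ)) := (map_nsmul (QuotientAddGroup.mk' H) 2 1).symm
        rw [hmap]
        refine (QuotientAddGroup.eq_zero_iff _).mpr ?_
        have e : (2:ℕ) • (1:ℤ) = 2 := by norm_num
        rw [e]; exact h2.2
      have hdvd : addOrderOf (QuotientAddGroup.mk (1:ℤ) : ℤ ⧸ H) ∣ 2 :=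
        addOrderOf_dvd_iff_nsmul_eq_zero.mpr h2q
      have hne1 : addOrderOf (QuotientAddGroup.mk (1:ℤ) : ℤ ⧸ H) ≠ 1 := by
        intro h1
        exact hq0 (AddMonoid.addOrderOf_eq_one_iff.mp h1)
      have hne0 : addOrderOf (QuotientAddGroup.mk (1:ℤ) : ℤ ⧸ H) ≠ 0 := by
        intro h0'
        rw [h0'] at hdvd
        simp at hdvd
      have hle := Nat.le_of_dvd (by norm_num) hdvd
      have heq2 : addOrderOf (QuotientAddGroup.mk (1:ℤ) : ℤ ⧸ H) = 2 := by omega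
      exact hH _ hne0 (by rw [heq2]; exact even_two)
    have h1 : (1:ℤ) ∈ C ∩ H := ⟨hC 0 h0.1 2 h2.1 1 zero_le_one one_le_two, h1H⟩
    rw [← hset] at h1
    have h1' : x + (1:ℤ) • (z - x) ∈ X := h1
    have e : x + (1:ℤ) • (z - x) = z := by
      rw [one_zsmul]; abel
    rwa [e] at h1'
end

section
/- If X is a subset of an abelian group G, x ∈ X, y ∈ X, z ∈ G \ X, 2z = x + y, and the set Z = {n ∈ ℤ : x + n•(z - x) ∈ X} equals C ∩ H for an order-convex set C ⊆ ℤ and a subgroup H ⊆ ℤ with ℤ/H having no elements of even order, then a contradiction follows. Equivalently: if for every g ∈ G and x ∈ X the set {n ∈ ℤ : x + n•g ∈ X} has the form C ∩ H as above, then X is midconvex. -/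
theorem stmt_2 {G : Type*} [AddCommGroup G] (X : Set G)
    (x y z : G) (hx : x ∈ X) (hy : y ∈ X) (hz : z ∉ X) (h2 : 2 • z = x + y)
    (C : Set ℤ) (H : AddSubgroup ℤ) (hC : OrderConvexZ C)
    (hH : ∀ q : ℤ ⧸ H, addOrderOf q ≠ 0 → ¬ Even (addOrderOf q))
    (hZ : {n : ℤ | x + n • (z - x) ∈ X} = C ∩ (H : Set ℤ)) : False := by
  have h0 : (0 : ℤ) ∈ C ∩ (H : Set ℤ) := by
    rw [← hZ]; simpa using hx
  have hy2 : x + (2 : ℤ) • (z - x) = y := by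
    have h2' : z + z = x + y := by simpa [two_smul] using h2
    rw [two_zsmul, show x + (z - x + (z - x)) = z + z - x by abel, h2']
    abel
  have h2m : (2 : ℤ) ∈ C ∩ (H : Set ℤ) := by
    rw [← hZ]; simp only [Set.mem_setOf_eq, hy2]; exact hy
  have h1 : (1 : ℤ) ∉ C ∩ (H : Set ℤ) := by
    rw [← hZ]; simpa using hz
  have h1C : (1 : ℤ) ∈ C := hC 0 h0.1 2 h2m.1 1 (by norm_num) (by norm_num)
  have h1H : (1 : ℤ) ∉ H := fun h => h1 ⟨h1C, h⟩
  set q : ℤ ⧸ H := QuotientAddGroup.mk 1 with hq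
  have hqne : q ≠ 0 := by
    simpa [hq, QuotientAddGroup.eq_zero_iff] using h1H
  have h2q : 2 • q = 0 := by
    have : q + q = 0 := by
      rw [hq, ← QuotientAddGroup.mk_add]
      exact (QuotientAddGroup.eq_zero_iff _).mpr (by simpa using h2m.2)
    simpa [two_smul] using this
  have hdvd : addOrderOf q ∣ 2 := addOrderOf_dvd_of_nsmul_eq_zero h2q
  have hne1 : addOrderOf q ≠ 1 := by
    intro h
    exact hqne (AddMonoid.addOrderOf_eq_one_iff.mp h)
  rcases (Nat.dvd_prime Nat.prime_two).mp hdvd with h | h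
  · exact hne1 h
  · exact hH q (by omega) (by rw [h]; exact even_two)
end

section
/- Let X be a midconvex subset of an abelian group G and x ∈ X. If a ∈ X - x (i.e., x + a ∈ X) and a has finite order in G, then 2a ∈ X - x (i.e., x + 2a ∈ X). -/
theorem stmt_3 {G : Type*} [AddCommGroup G] (X : Set G) (hX : Midconvex X)
    (x : G) (hx : x ∈ X) (a : G) (ha : x + a ∈ X)
    (hfin : ∃ n : ℕ, 0 < n ∧ n • a = 0) :
    x + 2 • a ∈ X := by
  obtain ⟨n, hn, hna⟩ := hfin
  set s : ℕ := n.factorization 2 with hs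
  set m : ℕ := n / 2 ^ s with hm
  have hm_cop : Nat.Coprime 2 m := Nat.coprime_ordCompl Nat.prime_two hn.ne'
  have hsm : 2 ^ s * m = n := Nat.ordProj_mul_ordCompl_eq_self n 2
  have hmpos : 0 < m := Nat.ordCompl_pos 2 hn.ne'
  have hg : (2:ℕ) ^ s • (m • a) = 0 := by
    rw [smul_smul, hsm, hna]
  -- from y ∈ X and 2^j • g = 0, all y + c • g ∈ X
  have mult : ∀ j : ℕ, ∀ g : G, (2:ℕ) ^ j • g = 0 → ∀ y ∈ X, ∀ c : ℕ, y + c • g ∈ X := by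
    intro j
    induction j with
    | zero =>
        intro g hgg y hy c
        simp only [pow_zero, one_smul] at hgg
        simpa [hgg] using hy
    | succ j ih =>
        intro g hgg y hy c
        have h2 : (2:ℕ) ^ j • ((2:ℕ) • g) = 0 := by
          rw [smul_smul, ← pow_succ]; exact hgg
        have hmem : y + c • ((2:ℕ) • g) ∈ X := ih ((2:ℕ) • g) h2 y hy c
        refine hX y hy _ hmem (y + c • g) ?_
        have : ((2:ℕ) • (y + c • g) : G) = y + (y + c • (2:ℕ) • g) := by
          rw [smul_comm c 2 g]
          simp only [two_smul]
          abel
        exact this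
  -- halving chain
  have halve : ∀ e : ℕ, ∀ w : G, x + (2:ℕ) ^ (e + 1) • w ∈ X → x + (2:ℕ) • w ∈ X := by
    intro e
    induction e with
    | zero => intro w hw; simpa using hw
    | succ e ih =>
        intro w hw
        apply ih
        refine hX x hx _ hw (x + (2:ℕ) ^ (e + 1) • w) ?_
        have hp : ((2:ℕ) ^ (e + 1 + 1)) • w = (2:ℕ) • (2:ℕ) ^ (e + 1) • w := by
          rw [smul_smul, ← pow_succ']
        rw [hp]
        simp only [two_smul]
        abel
  -- Euler's theorem: 2^E ≡ 1 mod m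
  set E : ℕ := m.totient with hE
  have hEpos : 0 < E := Nat.totient_pos.mpr hmpos
  have hmod : (2:ℕ) ^ E ≡ 1 [MOD m] := Nat.ModEq.pow_totient hm_cop
  have hdvd : m ∣ 2 ^ E - 1 := (Nat.modEq_iff_dvd' (Nat.one_le_two_pow)).mp hmod.symm
  obtain ⟨c, hc⟩ := hdvd
  have hp1 : 1 ≤ (2:ℕ) ^ E := Nat.one_le_two_pow
  rw [Nat.mul_comm] at hc
  have hpow : (2:ℕ) ^ E = 1 + c * m := by omega
  have hmemE : x + (2:ℕ) ^ E • a ∈ X := by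
    have h1 : (x + a) + c • (m • a) ∈ X := mult s (m • a) hg (x + a) ha c
    have h2 : (x + a) + c • (m • a) = x + (2:ℕ) ^ E • a := by
      rw [smul_smul, hpow, add_smul, one_smul, add_assoc]
    rwa [h2] at h1
  have := halve (E - 1) a (by rwa [Nat.sub_add_cancel hEpos] )
  simpa using this
end

section
/- If X is a midconvex subset of a periodic (torsion) abelian group G and x ∈ X, then the set X - x = {y - x : y ∈ X} is a subgroup of G. -/
/-- X is closed under adding 2-power torsion elements. -/
lemma midconvex_add_two_pow_torsion {G : Type*} [AddCommGroup G] {X : Set G}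
    (hX : Midconvex X) : ∀ s : ℕ, ∀ t : G, (2 ^ s : ℕ) • t = 0 →
    ∀ a ∈ X, a + t ∈ X := by
  intro s
  induction s with
  | zero =>
    intro t ht a ha
    simp only [pow_zero, one_smul] at ht
    simpa [ht] using ha
  | succ s ih =>
    intro t ht a ha
    have h2 : (2 ^ s : ℕ) • ((2 : ℕ) • t) = 0 := by
      rw [smul_smul, ← pow_succ]; exact ht
    have ha2 : a + (2 : ℕ) • t ∈ X := ih _ h2 a ha
    refine hX a ha (a + (2:ℕ) • t) ha2 (a + t) ?_
    have : (2:ℕ) • (a + t) = (2:ℕ) • a + (2:ℕ) • t := smul_add 2 a t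
    rw [this, two_smul]
    abel

/-- For d of odd order with x, x+d ∈ X, all x + m • d ∈ X. -/
lemma midconvex_odd {G : Type*} [AddCommGroup G] {X : Set G}
    (hX : Midconvex X) {x d : G} (hx : x ∈ X) (hd : x + d ∈ X)
    {n : ℕ} (hodd : Odd n) (hnd : n • d = 0) : ∀ m : ℤ, x + m • d ∈ X := by
  -- reduce smul modulo n
  have hzd : ((n : ℤ)) • d = 0 := by rw [natCast_zsmul]; exact hnd
  have hmodsmul : ∀ r s : ℤ, (n : ℤ) ∣ (r - s) → r • d = s • d := by
    intro r s ⟨e, he⟩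
    have : r = s + (n : ℤ) * e := by linarith
    rw [this, add_smul, mul_comm, mul_smul, hzd, smul_zero, add_zero]
  -- midpoint step
  have key : ∀ p q r : ℤ, x + p • d ∈ X → x + q • d ∈ X →
      (n : ℤ) ∣ (2 * r - p - q) → x + r • d ∈ X := by
    intro p q r hp hq hdvd
    refine hX _ hp _ hq (x + r • d) ?_
    have h1 : (2:ℕ) • (x + r • d) = (x + r • d) + (x + r • d) := two_nsmul _
    have h2 : (2 * r) • d = p • d + q • d := by
      rw [← add_smul]
      exact hmodsmul _ _ (by  simpa [sub_sub] using hdvd)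
    rw [h1]
    have : r • d + r • d = (2 * r) • d := by rw [two_mul, add_smul]
    calc (x + r • d) + (x + r • d) = x + x + (r • d + r • d) := by abel
      _ = x + x + (p • d + q • d) := by rw [this, h2]
      _ = (x + p • d) + (x + q • d) := by abel
  obtain ⟨w, hw⟩ := hodd
  -- c is the inverse of 2 mod n
  set c : ℤ := (w : ℤ) + 1 with hc_def
  have hc : 2 * c - 1 = (n : ℤ) := by simp [hc_def, hw]; ring
  -- dyadic induction
  have dyadic : ∀ k : ℕ, ∀ j : ℕ, j ≤ 2 ^ k → x + ((j : ℤ) * c ^ k) • d ∈ X := by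
    intro k
    induction k with
    | zero =>
      intro j hj
      interval_cases j
      · simpa using hx
      · simpa using hd
    | succ k ih =>
      intro j hj
      have hj2 : j / 2 ≤ 2 ^ k := by
        have : (2:ℕ) ^ (k+1) = 2 * 2 ^ k := by ring
        omega
      have hj1 : j - j / 2 ≤ 2 ^ k := by
        have : (2:ℕ) ^ (k+1) = 2 * 2 ^ k := by ring
        omega
      have hp := ih (j - j / 2) hj1
      have hq := ih (j / 2) hj2
      refine key _ _ _ hp hq ?_
      refine ⟨(j : ℤ) * c ^ k, ?_⟩
      have hsum : ((j - j / 2 : ℕ) : ℤ) + ((j / 2 : ℕ) : ℤ) = (j : ℤ) := by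
        push_cast [Nat.sub_add_cancel (Nat.div_le_self j 2)]
        omega
      have : (2 : ℤ) * ((j:ℤ) * c ^ (k+1)) - ((j - j/2 : ℕ):ℤ) * c ^ k - ((j/2 : ℕ):ℤ) * c ^ k
          = (j:ℤ) * c ^ k * (2 * c - 1) := by
        rw [pow_succ]
        linear_combination (c:ℤ)^k * hsum.symm
      rw [this, hc]; ring
  -- pick k with 2^k ≡ 1 and c^k ≡ 1 mod n
  by_cases h1' : n = 1
  · -- n = 1 : d = 0
    intro m
    have : d = 0 := by simpa [h1'] using hnd
    simpa [this] using hx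
  · have h1 : 1 < n := by omega
    set k := n.totient with hk
    have hcop : Nat.Coprime 2 n := Nat.coprime_two_left.mpr ⟨w, hw⟩
    have h2k : (2:ℕ) ^ k ≡ 1 [MOD n] := Nat.ModEq.pow_totient hcop
    have h2kZ : ((2:ℤ)) ^ k ≡ 1 [ZMOD n] := by
      have := Int.natCast_modEq_iff.mpr h2k
      push_cast at this
      exact this
    have hckZ : c ^ k ≡ 1 [ZMOD n] := by
      have h2c : (2 * c) ≡ 1 [ZMOD n] := by
        have : (2 : ℤ) * c - 1 = n := hc
        exact Int.ModEq.symm (Int.modEq_iff_dvd.mpr ⟨1, by linarith⟩)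
      calc c ^ k = c ^ k * 1 := by ring
        _ ≡ c ^ k * 2 ^ k [ZMOD n] := Int.ModEq.mul_left _ h2kZ.symm
        _ = (2 * c) ^ k := by rw [← mul_pow, mul_comm c 2]
        _ ≡ 1 ^ k [ZMOD n] := h2c.pow k
        _ = 1 := one_pow k
    have hnk : n ≤ 2 ^ k := by
      have hk1 : 1 ≤ k := Nat.totient_pos.mpr (by omega)
      have h2k1 : 2 ^ k % n = 1 % n := h2k
      by_contra hlt
      push_neg at hlt
      have : 2 ^ k % n = 2 ^ k := Nat.mod_eq_of_lt hlt
      have h1n : 1 % n = 1 := Nat.mod_eq_of_lt h1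
      have : (2:ℕ) ^ k = 1 := by omega
      have : (2:ℕ) ^ k ≥ 2 ^ 1 := Nat.pow_le_pow_right (by norm_num) hk1
      omega
    intro m
    have hnpos : (0:ℤ) < (n:ℤ) := by exact_mod_cast Nat.lt_of_lt_of_le Nat.zero_lt_one h1.le
    set j : ℕ := (m % (n:ℤ)).toNat with hj_def
    have hjm : (j : ℤ) = m % (n:ℤ) := Int.toNat_of_nonneg (Int.emod_nonneg m hnpos.ne')
    have hjlt : j < n := by
      have := Int.emod_lt_of_pos m hnpos
      omega
    have hmem := dyadic k j (le_trans hjlt.le hnk)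
    have heq : ((j:ℤ) * c ^ k) • d = m • d := by
      apply hmodsmul
      have h1 : (j:ℤ) * c ^ k ≡ (j:ℤ) * 1 [ZMOD n] := Int.ModEq.mul_left _ hckZ
      have h2 : (j:ℤ) ≡ m [ZMOD n] := by
        rw [hjm]; exact Int.mod_modEq m n
      have : (j:ℤ) * c ^ k ≡ m [ZMOD n] := (h1.trans (by rw [mul_one])).trans h2
      exact (Int.ModEq.dvd this.symm)
    rw [← heq]; exact hmem

/-- All x + m • (a - x) are in X. -/
lemma midconvex_zsmul {G : Type*} [AddCommGroup G]
    (htor : ∀ g : G, ∃ n : ℕ, 0 < n ∧ n • g = 0)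
    {X : Set G} (hX : Midconvex X) {x : G} (hx : x ∈ X) :
    ∀ a ∈ X, ∀ m : ℤ, x + m • (a - x) ∈ X := by
  intro a ha m
  set d := a - x with hd
  obtain ⟨n, hn, hnd⟩ := htor d
  obtain ⟨s, q, hq_odd, hn_eq⟩ := Nat.exists_eq_two_pow_mul_odd hn.ne'
  have hcop : IsCoprime ((2:ℤ) ^ s) (q : ℤ) := by
    rw [Int.isCoprime_iff_gcd_eq_one]
    have h : Nat.Coprime (2 ^ s) q :=
      Nat.Coprime.pow_left s (Nat.coprime_two_left.mpr hq_odd)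
    have h2 : ((2:ℤ))^s = ((2^s : ℕ) : ℤ) := by push_cast; ring
    rw [h2, Int.gcd_natCast_natCast]
    exact h
  obtain ⟨u, v, huv⟩ := hcop
  set e1 : G := (u * 2 ^ s) • d with he1
  set e2 : G := (v * (q:ℤ)) • d with he2
  have hznd : ((n:ℤ)) • d = 0 := by rw [natCast_zsmul]; exact hnd
  have hde : d = e1 + e2 := by
    rw [he1, he2, ← add_smul]
    have : u * 2 ^ s + v * (q:ℤ) = 1 := huv
    rw [this, one_smul]
  have hq_e1 : (q : ℕ) • e1 = 0 := by
    have : ((q:ℤ)) • e1 = 0 := by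
      rw [he1, smul_smul]
      have : (q:ℤ) * (u * 2 ^ s) = u * (n:ℤ) := by
        rw [hn_eq]; push_cast; ring
      rw [this, mul_smul, hznd, smul_zero]
    rw [← natCast_zsmul]; exact this
  have hs_e2 : ((2:ℕ) ^ s) • e2 = 0 := by
    have : ((2:ℤ) ^ s) • e2 = 0 := by
      rw [he2, smul_smul]
      have : (2:ℤ) ^ s * (v * (q:ℤ)) = v * (n:ℤ) := by
        rw [hn_eq]; push_cast; ring
      rw [this, mul_smul, hznd, smul_zero]
    rw [← natCast_zsmul]; push_cast; exact this
  -- x + e1 ∈ X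
  have hxe1 : x + e1 ∈ X := by
    have hneg : ((2:ℕ) ^ s) • (-e2) = 0 := by rw [smul_neg, hs_e2, neg_zero]
    have := midconvex_add_two_pow_torsion hX s (-e2) hneg a ha
    have hax : a = x + d := by rw [hd]; abel
    have : x + d + (-e2) ∈ X := by rwa [hax] at this
    have heq : x + d + (-e2) = x + e1 := by rw [hde]; abel
    rwa [heq] at this
  have hq_pos : 0 < q := hq_odd.pos
  have hodd := midconvex_odd hX hx hxe1 hq_odd hq_e1 m
  -- add back m • e2
  have ht : ((2:ℕ) ^ s) • (m • e2) = 0 := by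
    rw [smul_comm, hs_e2, smul_zero]
  have := midconvex_add_two_pow_torsion hX s (m • e2) ht _ hodd
  have heq : x + m • e1 + m • e2 = x + m • d := by
    rw [hde, smul_add]; abel
  rwa [heq] at this

theorem stmt_4 {G : Type*} [AddCommGroup G]
    (htor : ∀ g : G, ∃ n : ℕ, 0 < n ∧ n • g = 0)
    (X : Set G) (hX : Midconvex X) (x : G) (hx : x ∈ X) :
    ∃ H : AddSubgroup G, (H : Set G) = (· - x) '' X := by
  have L := midconvex_zsmul htor hX hx
  refine ⟨{
    carrier := (· - x) '' X
    zero_mem' := ⟨x, hx, sub_self x⟩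
    add_mem' := ?_
    neg_mem' := ?_ }, rfl⟩
  · rintro p q ⟨a, ha, rfl⟩ ⟨b, hb, rfl⟩
    have h2a := L a ha 2
    have h2b := L b hb 2
    have hc : a + b - x ∈ X := by
      refine hX _ h2a _ h2b (a + b - x) ?_
      have : (2:ℕ) • (a + b - x) = (a + b - x) + (a + b - x) := two_nsmul _
      rw [this, two_zsmul, two_zsmul]
      abel
    exact ⟨a + b - x, hc, by show a + b - x - x = (a - x) + (b - x); abel⟩
  · rintro p ⟨a, ha, rfl⟩
    have := L a ha (-1)
    refine ⟨x + (-1 : ℤ) • (a - x), this, ?_⟩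
    simp only [neg_smul, one_smul]
    abel
end

section
/- If X is a midconvex subset of a periodic abelian group G and x ∈ X, then X - x is a subgroup of G and every element of the quotient group G/(X - x) has odd order. -/
section Aux
variable {G : Type*} [AddCommGroup G] {Y : Set G}

lemma mc_half (hY : Midconvex Y) (h0 : (0:G) ∈ Y) {u : G} (hu : u ∈ Y)
    {z : G} (hz : 2 • z = u) : z ∈ Y :=
  hY u hu 0 h0 z (by rw [hz, add_zero])

lemma smul_mod_nat {m : ℕ} {g : G} (hg : m • g = 0) (k : ℕ) :
    k • g = (k % m) • g := by
  conv_lhs => rw [← Nat.mod_add_div k m]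
  rw [add_smul, mul_comm, mul_smul, hg, smul_zero, add_zero]

lemma smul_congr_mod {m : ℕ} {g : G} (hg : m • g = 0) {k l : ℕ}
    (h : k ≡ l [MOD m]) : k • g = l • g := by
  rw [smul_mod_nat hg k, smul_mod_nat hg l, h]

/-- closure under adding elements of 2-power order -/
lemma mc_two_pow (hY : Midconvex Y) (h0 : (0:G) ∈ Y) :
    ∀ (b : ℕ) (s t : G), 2 ^ b • s = 0 → t ∈ Y → t + s ∈ Y := by
  intro b
  induction b with
  | zero => intro s t hs ht; simp only [pow_zero, one_smul] at hs; simpa [hs] using ht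
  | succ b ih =>
    intro s t hs ht
    have h2 : t + 2 • s ∈ Y := by
      apply ih (2 • s) t
      · rw [← mul_smul, ← pow_succ, hs]
      · exact ht
    apply hY t ht (t + 2 • s) h2
    rw [smul_add]
    rw [two_smul]
    abel

/-- odd-order sums -/
lemma mc_odd (hY : Midconvex Y) (h0 : (0:G) ∈ Y) {m : ℕ} (hm : Odd m)
    {u v : G} (hu : u ∈ Y) (hv : v ∈ Y) (hg : m • (u + v) = 0) :
    u + v ∈ Y := by
  set g := u + v with hgdef
  obtain ⟨h, hh⟩ : ∃ h : ℕ, 2 * h = m + 1 := ⟨(m+1)/2, by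
    obtain ⟨j, rfl⟩ := hm; omega⟩
  have h2h : 2 * h ≡ 1 [MOD m] := by
    rw [hh]; exact Nat.add_mod_left m 1
  have hcop : Nat.Coprime 2 m := by
    exact Nat.coprime_two_left.mpr hm
  have hm1 : 1 ≤ m := by rcases hm with ⟨j, rfl⟩; omega
  have euler : 2 ^ Nat.totient m ≡ 1 [MOD m] := Nat.ModEq.pow_totient hcop
  have hhe : h ^ Nat.totient m ≡ 1 [MOD m] := by
    have := (h2h.pow (Nat.totient m))
    rw [mul_pow, one_pow] at this
    calc h ^ Nat.totient m ≡ 1 * h ^ Nat.totient m [MOD m] := by rw [one_mul]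
      _ ≡ 2 ^ Nat.totient m * h ^ Nat.totient m [MOD m] := (euler.symm.mul_right _)
      _ ≡ 1 [MOD m] := this
  -- h^(j+1) • g ∈ Y for all j
  have key : ∀ j : ℕ, h ^ (j + 1) • g ∈ Y := by
    intro j
    induction j with
    | zero =>
      apply hY u hu v hv
      rw [← hgdef, pow_one, ← mul_smul, smul_congr_mod hg h2h, one_smul]
    | succ j ih =>
      apply mc_half hY h0 ih
      rw [← mul_smul]
      have : 2 * h ^ (j + 1 + 1) = 2 * h * h ^ (j + 1) := by ring
      rw [this, smul_congr_mod hg (h2h.mul_right _), one_mul]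
  have : h ^ Nat.totient m • g ∈ Y := by
    have ht1 : 1 ≤ Nat.totient m := Nat.totient_pos.mpr hm1
    obtain ⟨j, hj⟩ := Nat.exists_eq_add_of_le ht1
    rw [hj, add_comm 1 j]
    exact key j
  rwa [smul_congr_mod hg hhe, one_smul] at this

end Aux

section Aux2
variable {G : Type*} [AddCommGroup G] {Y : Set G}

lemma mc_add (hY : Midconvex Y) (h0 : (0:G) ∈ Y) {u v : G} (hu : u ∈ Y) (hv : v ∈ Y)
    {n : ℕ} (hn : 0 < n) (hg : n • (u + v) = 0) : u + v ∈ Y := by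
  set g := u + v with hgdef
  obtain ⟨a, m, hm, hnm⟩ := Nat.exists_eq_two_pow_mul_odd hn.ne'
  have hmpos : 0 < m := hm.pos
  -- Bezout: ∃ c d : ℤ, 2^a * c + m * d = 1
  have hcop : Int.gcd (2 ^ a : ℤ) (m : ℤ) = 1 := by
    have hc : Nat.Coprime (2 ^ a) m := (Nat.coprime_two_left.mpr hm).pow_left a
    have h2 : ((2:ℤ)^a) = ((2^a : ℕ) : ℤ) := by push_cast; ring
    rw [h2, Int.gcd_natCast_natCast]
    exact hc
  obtain ⟨c, d, hcd⟩ : ∃ c d : ℤ, 2 ^ a * c + m * d = 1 := by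
    refine ⟨Int.gcdA (2 ^ a) m, Int.gcdB (2 ^ a) m, ?_⟩
    have := Int.gcd_eq_gcd_ab (2 ^ a : ℤ) (m : ℤ)
    rw [hcop] at this
    push_cast at this ⊢
    linarith
  have hgz : (n : ℤ) • g = 0 := by rw [natCast_zsmul, hg]
  set p : G := (2 ^ a * c) • g with hp
  set q : G := g - p with hq
  have hmp : (m : ℤ) • p = 0 := by
    rw [hp, ← mul_smul]
    have : (m : ℤ) * (2 ^ a * c) = c * n := by
      rw [hnm]; push_cast; ring
    rw [this, mul_smul, hgz, smul_zero]
  have h2q : (2 ^ a : ℤ) • q = 0 := by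
    rw [hq, smul_sub, hp, ← mul_smul]
    have : (2 ^ a : ℤ) * (2 ^ a * c) = 2 ^ a * (1 - m * d) := by linear_combination (2^a : ℤ) * hcd
    rw [this]
    have h2 : ((2:ℤ) ^ a * (1 - m * d)) • g = (2 ^ a : ℤ) • g - d • ((n:ℤ) • g) := by
      rw [hnm, ← mul_smul, ← sub_smul]; push_cast; ring_nf
    rw [h2, hgz, smul_zero, sub_zero, sub_self]
  -- convert 2-power torsion statements to ℕ-smul for mc_two_pow
  have h2q' : (2 : ℕ) ^ a • (-q) = 0 := by
    have : (2 ^ a : ℤ) • (-q) = 0 := by rw [smul_neg, h2q, neg_zero]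
    rw [← this]; push_cast [natCast_zsmul]; norm_cast
  have hvq : v + -q ∈ Y := mc_two_pow hY h0 a (-q) v h2q' hv
  have hup : u + (v + -q) = p := by rw [hq, hgdef]; abel
  have hpY : p ∈ Y := by
    rw [← hup]
    apply mc_odd hY h0 hm hu hvq
    rw [hup]
    have : (m : ℤ) • p = (m : ℕ) • p := by rw [natCast_zsmul]
    rw [← this, hmp]  -- careful: goal is m • p = 0 with ℕ smul
  have h2q'' : (2 : ℕ) ^ a • q = 0 := by
    have := h2q; rw [← this]; push_cast [natCast_zsmul]; norm_cast
  have : p + q ∈ Y := mc_two_pow hY h0 a q p h2q'' hpY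
  rwa [hq, add_sub_cancel] at this

lemma mc_nsmul (hY : Midconvex Y) (h0 : (0:G) ∈ Y)
    (htor : ∀ g : G, ∃ n : ℕ, 0 < n ∧ n • g = 0)
    {u : G} (hu : u ∈ Y) : ∀ k : ℕ, (k + 1) • u ∈ Y := by
  intro k
  induction k with
  | zero => simpa using hu
  | succ k ih =>
    have heq : (k + 1 + 1) • u = u + (k+1) • u := by rw [add_smul, one_smul]; abel
    rw [heq]
    obtain ⟨n, hn, hgn⟩ := htor (u + (k+1) • u)
    exact mc_add hY h0 hu ih hn hgn

lemma mc_neg (hY : Midconvex Y) (h0 : (0:G) ∈ Y)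
    (htor : ∀ g : G, ∃ n : ℕ, 0 < n ∧ n • g = 0)
    {u : G} (hu : u ∈ Y) : -u ∈ Y := by
  obtain ⟨n, hn, hgn⟩ := htor u
  rcases eq_or_lt_of_le (show 1 ≤ n from hn) with h1 | h2
  · have : u = 0 := by rw [← one_smul ℕ u, show (1:ℕ) = n from h1, hgn]
    simpa [this] using h0
  · have hneg : -u = (n - 1) • u := by
      have : (n - 1) • u + u = n • u := by
        rw [← succ_nsmul]
        congr 1
        omega
      rw [hgn] at this
      linear_combination (norm := abel_nf) -this
    rw [hneg]
    have : n - 1 = (n - 2) + 1 := by omega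
    rw [this]
    exact mc_nsmul hY h0 htor hu (n - 2)

end Aux2

theorem stmt_5 {G : Type*} [AddCommGroup G]
    (htor : ∀ g : G, ∃ n : ℕ, 0 < n ∧ n • g = 0)
    (X : Set G) (hX : Midconvex X) (x : G) (hx : x ∈ X) :
    ∃ H : AddSubgroup G, (H : Set G) = (· - x) '' X ∧
      ∀ q : G ⧸ H, Odd (addOrderOf q) := by
  set Y : Set G := (· - x) '' X with hYdef
  have h0 : (0:G) ∈ Y := ⟨x, hx, sub_self x⟩
  have hY : Midconvex Y := by
    rintro u ⟨u', hu', rfl⟩ v ⟨v', hv', rfl⟩ z hz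
    refine ⟨z + x, hX u' hu' v' hv' (z + x) ?_, by simp⟩
    rw [smul_add, hz, two_smul]
    simp only [two_nsmul]
    abel
  set H : AddSubgroup G :=
    { carrier := Y,
      zero_mem' := h0,
      add_mem' := fun {a b} ha hb => by
        obtain ⟨n, hn, hgn⟩ := htor (a + b)
        exact mc_add hY h0 ha hb hn hgn,
      neg_mem' := fun {a} ha => mc_neg hY h0 htor ha } with hH
  refine ⟨H, rfl, ?_⟩
  intro q
  refine QuotientAddGroup.induction_on q (fun g => ?_)
  obtain ⟨n, hn, hgn⟩ := htor g
  obtain ⟨a, m, hm, hnm⟩ := Nat.exists_eq_two_pow_mul_odd hn.ne'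
  have hmg : m • g ∈ Y := by
    have h2 : (2:ℕ) ^ a • (m • g) = 0 := by
      rw [← mul_smul, ← hnm, hgn]
    have := mc_two_pow hY h0 a (m • g) 0 h2 h0
    rwa [zero_add] at this
  have hzero : m • ((g : G ⧸ H)) = 0 := by
    rw [← QuotientAddGroup.mk_nsmul]
    exact (QuotientAddGroup.eq_zero_iff _).mpr hmg
  have hdvd : addOrderOf ((g : G ⧸ H)) ∣ m := addOrderOf_dvd_of_nsmul_eq_zero hzero
  rcases Nat.even_or_odd (addOrderOf ((g : G ⧸ H))) with he | ho
  · exfalso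
    have h2m : 2 ∣ m := dvd_trans he.two_dvd hdvd
    rw [← Nat.not_even_iff_odd] at hm
    exact hm (even_iff_two_dvd.mpr h2m)
  · exact ho
end

section
/- Let G be an abelian group and X ⊆ G a subset such that for some x ∈ X, X - x is a subgroup H of G and the quotient group G/H has no elements of order 2. Then X is midconvex. -/
theorem stmt_6 {G : Type*} [AddCommGroup G] (X : Set G) (x : G) (hx : x ∈ X)
    (H : AddSubgroup G) (hH : (H : Set G) = (· - x) '' X)
    (h2 : ∀ g : G, 2 • g ∈ H → g ∈ H) :
    Midconvex X := by
  intro u hu v hv z hz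
  have hmem : ∀ w ∈ X, w - x ∈ H := fun w hw => by
    rw [← SetLike.mem_coe, hH]; exact ⟨w, hw, rfl⟩
  have h : (2 : ℕ) • (z - x) ∈ H := by
    have : (2 : ℕ) • (z - x) = (u - x) + (v - x) := by
      rw [smul_sub, hz]; abel
    rw [this]; exact H.add_mem (hmem u hu) (hmem v hv)
  have hz' := h2 _ h
  rw [← SetLike.mem_coe, hH] at hz'
  obtain ⟨w, hw, hwe⟩ := hz'
  have : w = z := by
    have := sub_left_injective (G := G) (b := x) hwe
    exact this
  rwa [← this]
end

section
/- A subset X of a periodic (torsion) abelian group G is midconvex if and only if for every x ∈ X, the set X - x is a subgroup of G such that every element of the quotient group G/(X - x) has odd order. -/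
section Aux

variable {G : Type*} [AddCommGroup G] {Y : Set G}

private lemma smul_zero_of_dvd' {a : G} {n c : ℕ} (hna : n • a = 0) (h : n ∣ c) :
    c • a = 0 := by
  obtain ⟨t, rfl⟩ := h
  rw [mul_nsmul, hna, smul_zero]

private lemma mem_of_two_pow (hm : ∀ u ∈ Y, ∀ v ∈ Y, ∀ z : G, 2 • z = u + v → z ∈ Y)
    (h0 : (0 : G) ∈ Y) : ∀ k : ℕ, ∀ g : G, (2 : ℕ) ^ k • g = 0 → g ∈ Y := by
  intro k
  induction k with
  | zero =>
    intro g hg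
    simp only [pow_zero, one_nsmul] at hg
    exact hg ▸ h0
  | succ k ih =>
    intro g hg
    have h2g : (2 : ℕ) ^ k • (2 • g) = 0 := by
      rw [← mul_nsmul', ← pow_succ]
      exact hg
    exact hm _ (ih _ h2g) 0 h0 g (by rw [add_zero])

private lemma odd_multiples (hm : ∀ u ∈ Y, ∀ v ∈ Y, ∀ z : G, 2 • z = u + v → z ∈ Y)
    (h0 : (0 : G) ∈ Y) {a : G} (ha : a ∈ Y) {m : ℕ}
    (hodd : Odd m) (hma : m • a = 0) : ∀ j : ℕ, j • a ∈ Y := by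
  obtain ⟨t, ht⟩ := hodd
  have hm1 : 1 ≤ m := by omega
  have hmod : ∀ q : ℕ, q • a = (q % m) • a := by
    intro q
    conv_lhs => rw [← Nat.div_add_mod q m]
    rw [add_nsmul, mul_nsmul, hma, smul_zero, zero_add]
  set h : ℕ := t + 1 with hh
  have h2h : 2 * h = m + 1 := by omega
  have key : ∀ k : ℕ, ∀ p : ℕ, p ≤ 2 ^ k → (h ^ k * p) • a ∈ Y := by
    intro k
    induction k with
    | zero =>
      intro p hp
      interval_cases p
      · simpa using h0
      · simpa using ha
    | succ k ih =>
      intro p hp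
      have h2k : (2 : ℕ) ^ (k + 1) = 2 ^ k + 2 ^ k := by rw [pow_succ]; ring
      have hsle : min p (2 ^ k) ≤ 2 ^ k := min_le_right _ _
      have hts : p - min p (2 ^ k) ≤ 2 ^ k := by omega
      refine hm _ (ih (min p (2 ^ k)) hsle) _ (ih (p - min p (2 ^ k)) hts) _ ?_
      have hst : min p (2 ^ k) + (p - min p (2 ^ k)) = p := by omega
      rw [← add_nsmul, ← Nat.mul_add, hst, ← mul_nsmul']
      have harith : 2 * (h ^ (k + 1) * p) = m * (h ^ k * p) + h ^ k * p := by
        have : 2 * (h ^ (k + 1) * p) = (2 * h) * (h ^ k * p) := by rw [pow_succ]; ring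
        rw [this, h2h]; ring
      rw [harith, add_nsmul, mul_nsmul, hma, smul_zero, zero_add]
  intro j
  have hcop : Nat.Coprime 2 m := Nat.coprime_two_left.mpr ⟨t, ht⟩
  set k := Nat.totient m with hk
  have hkpos : 0 < k := Nat.totient_pos.mpr hm1
  have h2k1 : 2 ^ k ≡ 1 [MOD m] := Nat.ModEq.pow_totient hcop
  have h1le : 1 ≤ 2 ^ k := Nat.one_le_two_pow
  have h2kge : m < 2 ^ k := by
    have hdvd : m ∣ 2 ^ k - 1 := (Nat.modEq_iff_dvd' h1le).mp h2k1.symm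
    have h2 : 2 ≤ 2 ^ k := by
      calc 2 = 2 ^ 1 := by norm_num
        _ ≤ 2 ^ k := Nat.pow_le_pow_right (by norm_num) hkpos
    have := Nat.le_of_dvd (by omega) hdvd
    omega
  have hhk : h ^ k ≡ 1 [MOD m] := by
    calc h ^ k ≡ h ^ k * 2 ^ k [MOD m] := by
          conv_lhs => rw [← Nat.mul_one (h ^ k)]
          exact Nat.ModEq.mul_left _ h2k1.symm
      _ = (2 * h) ^ k := by rw [mul_pow]; ring
      _ = (m + 1) ^ k := by rw [h2h]
      _ ≡ 1 ^ k [MOD m] := Nat.ModEq.pow k Nat.add_modEq_left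
      _ = 1 := one_pow k
  have hp : j % m < m := Nat.mod_lt _ hm1
  have hmem := key k (j % m) (by omega)
  have heq : (h ^ k * (j % m)) • a = j • a := by
    rw [hmod (h ^ k * (j % m)), hmod j]
    congr 1
    have hme : h ^ k * (j % m) ≡ 1 * (j % m) [MOD m] := Nat.ModEq.mul_right _ hhk
    calc (h ^ k * (j % m)) % m = (1 * (j % m)) % m := hme
      _ = (j % m) % m := by rw [one_mul]
      _ = j % m := Nat.mod_mod_of_dvd _ dvd_rfl
  exact heq ▸ hmem

private lemma all_multiples (hm : ∀ u ∈ Y, ∀ v ∈ Y, ∀ z : G, 2 • z = u + v → z ∈ Y)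
    (h0 : (0 : G) ∈ Y) (htor : ∀ g : G, ∃ n : ℕ, 0 < n ∧ n • g = 0)
    {a : G} (ha : a ∈ Y) : ∀ j : ℕ, j • a ∈ Y := by
  obtain ⟨n, hn, hna⟩ := htor a
  obtain ⟨k, m, hmodd, rfl⟩ := Nat.exists_eq_two_pow_mul_odd hn.ne'
  have hm1 : 1 ≤ m := hmodd.pos
  set K := k * Nat.totient m with hK
  have hcop : Nat.Coprime (2 ^ k) m := (Nat.coprime_two_left.mpr hmodd).pow_left k
  have h2K1 : 2 ^ K ≡ 1 [MOD m] := by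
    rw [hK, pow_mul]; exact Nat.ModEq.pow_totient hcop
  have h1le : 1 ≤ 2 ^ K := Nat.one_le_two_pow
  have hdvdm : m ∣ 2 ^ K - 1 := (Nat.modEq_iff_dvd' h1le).mp h2K1.symm
  have hkK : k ≤ K := by
    have h1 : 0 < Nat.totient m := Nat.totient_pos.mpr hm1
    calc k = k * 1 := (mul_one k).symm
      _ ≤ K := Nat.mul_le_mul_left k h1
  set v := (2 ^ K - 1) • a with hv
  have hvord : (2 : ℕ) ^ k • v = 0 := by
    rw [hv, ← mul_nsmul']
    exact smul_zero_of_dvd' hna (mul_dvd_mul_left (2 ^ k) hdvdm)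
  have hvY : v ∈ Y := mem_of_two_pow hm h0 k v hvord
  set w := a + v with hw
  have hwa : w = (2 : ℕ) ^ K • a := by
    rw [hw, hv]
    nth_rewrite 1 [← one_nsmul a]
    rw [← add_nsmul]
    congr 1
    omega
  have hmw : m • w = 0 := by
    rw [hwa, ← mul_nsmul']
    refine smul_zero_of_dvd' hna ?_
    obtain ⟨d, hd⟩ := pow_dvd_pow 2 hkK
    exact ⟨d, by rw [hd]; ring⟩
  obtain ⟨t, ht⟩ := hmodd
  set z0 := (t + 1) • w with hz0
  have h2z0 : 2 • z0 = w := by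
    rw [hz0, ← mul_nsmul']
    have he : 2 * (t + 1) = m + 1 := by omega
    rw [he, add_nsmul, hmw, zero_add, one_nsmul]
  have hz0Y : z0 ∈ Y := hm a ha v hvY z0 (by rw [h2z0, hw])
  have hmz0 : m • z0 = 0 := by
    rw [hz0, ← mul_nsmul', mul_nsmul, hmw, smul_zero]
  have hmul_z0 : ∀ i : ℕ, i • z0 ∈ Y := odd_multiples hm h0 hz0Y ⟨t, ht⟩ hmz0
  have hr0 : (2 : ℕ) ^ k • (a - w) = 0 := by
    have haw : a - w = -v := by rw [hw]; abel
    rw [haw, smul_neg, hvord, neg_zero]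
  intro j
  have hu : (2 * j * 2) • z0 ∈ Y := hmul_z0 _
  have huw : (2 * j * 2) • z0 = (2 * j) • w := by
    rw [mul_nsmul', h2z0]
  have hv2 : (2 : ℕ) ^ k • ((2 * j) • (a - w)) = 0 := by
    rw [← mul_nsmul', mul_comm, mul_nsmul', hr0, smul_zero]
  have hvY2 : (2 * j) • (a - w) ∈ Y := mem_of_two_pow hm h0 k _ hv2
  refine hm _ (huw ▸ hu) _ hvY2 (j • a) ?_
  have hsum : (2 * j) • w + (2 * j) • (a - w) = (2 * j) • a := by
    rw [← smul_add]
    congr 1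
    abel
  rw [hsum, mul_nsmul']

end Aux

theorem stmt_7 {G : Type*} [AddCommGroup G]
    (htor : ∀ g : G, ∃ n : ℕ, 0 < n ∧ n • g = 0) (X : Set G) :
    Midconvex X ↔
      ∀ x ∈ X, ∃ H : AddSubgroup G, (H : Set G) = (· - x) '' X ∧
        ∀ q : G ⧸ H, Odd (addOrderOf q) := by
  constructor
  · intro hmc x hx
    set Y : Set G := (· - x) '' X with hY
    have hmY : ∀ u ∈ Y, ∀ v ∈ Y, ∀ z : G, 2 • z = u + v → z ∈ Y := by
      rintro u ⟨yu, hyu, rfl⟩ v ⟨yv, hyv, rfl⟩ z hz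
      refine ⟨z + x, hmc yu hyu yv hyv (z + x) ?_, add_sub_cancel_right z x⟩
      beta_reduce at hz
      rw [smul_add, hz, two_nsmul]
      abel
    have h0Y : (0 : G) ∈ Y := ⟨x, hx, sub_self x⟩
    have hmulY : ∀ a ∈ Y, ∀ j : ℕ, j • a ∈ Y := fun a ha =>
      all_multiples hmY h0Y htor ha
    have hadd : ∀ a ∈ Y, ∀ b ∈ Y, a + b ∈ Y := fun a ha b hb =>
      hmY _ (hmulY a ha 2) _ (hmulY b hb 2) (a + b) (by rw [smul_add])
    have hneg : ∀ a ∈ Y, -a ∈ Y := by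
      intro a ha
      obtain ⟨n, hn0, hna⟩ := htor a
      have hkey : (n - 1) • a = -a := by
        have hsum : (n - 1) • a + a = 0 := by
          nth_rewrite 2 [← one_nsmul a]
          rw [← add_nsmul, show n - 1 + 1 = n by omega, hna]
        exact eq_neg_of_add_eq_zero_left hsum
      exact hkey ▸ hmulY a ha (n - 1)
    let H : AddSubgroup G :=
      { carrier := Y
        add_mem' := fun ha hb => hadd _ ha _ hb
        zero_mem' := h0Y
        neg_mem' := fun ha => hneg _ ha }
    refine ⟨H, rfl, ?_⟩
    intro q
    obtain ⟨g, rfl⟩ := QuotientAddGroup.mk'_surjective H q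
    have hpush : ∀ (c : ℕ) (g' : G),
        (QuotientAddGroup.mk' H) (c • g') = c • (QuotientAddGroup.mk' H g') := fun c g' =>
      map_nsmul (QuotientAddGroup.mk' H) c g'
    have hfin : IsOfFinAddOrder (QuotientAddGroup.mk' H g) := by
      obtain ⟨N, hN0, hNg⟩ := htor g
      refine isOfFinAddOrder_iff_nsmul_eq_zero.mpr ⟨N, hN0, ?_⟩
      rw [← hpush, hNg, map_zero]
    have hpos : 0 < addOrderOf (QuotientAddGroup.mk' H g) := hfin.addOrderOf_pos
    rcases Nat.even_or_odd (addOrderOf (QuotientAddGroup.mk' H g)) with he | ho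
    · exfalso
      obtain ⟨r, hr⟩ := he
      set n := addOrderOf (QuotientAddGroup.mk' H g) with hn
      have hr1 : 1 ≤ r := by omega
      have h2mem : 2 • (r • g) ∈ H := by
        rw [← QuotientAddGroup.eq_zero_iff]
        have : (QuotientAddGroup.mk' H) (2 • r • g) = (r * 2) • (QuotientAddGroup.mk' H g) := by
          rw [hpush, hpush, ← mul_nsmul]
        rw [QuotientAddGroup.mk'_apply] at this
        rw [this, show r * 2 = n by omega, hn]
        exact addOrderOf_nsmul_eq_zero _
      have hrg : r • g ∈ H :=
        hmY _ h2mem _ h0Y (r • g) (by rw [add_zero])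
      have hrq : r • (QuotientAddGroup.mk' H g) = 0 := by
        rw [← hpush]
        exact (QuotientAddGroup.eq_zero_iff _).mpr hrg
      have hdvd : n ∣ r := addOrderOf_dvd_of_nsmul_eq_zero hrq
      have := Nat.le_of_dvd (by omega) hdvd
      omega
    · exact ho
  · intro hX x hx y hy z hz
    obtain ⟨H, hH, hodd⟩ := hX x hx
    have hyH : y - x ∈ H := by
      rw [← SetLike.mem_coe, hH]
      exact ⟨y, hy, rfl⟩
    have h2z : 2 • (z - x) = y - x := by
      rw [smul_sub, hz, two_nsmul]
      abel
    have h2q : 2 • ((QuotientAddGroup.mk' H) (z - x)) = 0 := by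
      rw [← map_nsmul, h2z]
      exact (QuotientAddGroup.eq_zero_iff _).mpr hyH
    have hdvd : addOrderOf ((QuotientAddGroup.mk' H) (z - x)) ∣ 2 :=
      addOrderOf_dvd_of_nsmul_eq_zero h2q
    have hoddq := hodd ((QuotientAddGroup.mk' H) (z - x))
    have h1 : addOrderOf ((QuotientAddGroup.mk' H) (z - x)) = 1 := by
      rcases (Nat.prime_two.eq_one_or_self_of_dvd _ hdvd) with h | h
      · exact h
      · rw [h] at hoddq
        exact absurd hoddq (by decide)
    have hq0 : (QuotientAddGroup.mk' H) (z - x) = 0 :=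
      AddMonoid.addOrderOf_eq_one_iff.mp h1
    have hzH : z - x ∈ H := (QuotientAddGroup.eq_zero_iff _).mp hq0
    rw [← SetLike.mem_coe, hH] at hzH
    obtain ⟨y', hy', hy'e⟩ := hzH
    have : y' = z := by
      have := sub_left_inj.mp hy'e
      exact this
    exact this ▸ hy'
end

section
/- Let G be a subgroup of ℚ, C ⊆ ℚ an order-convex set, x ∈ G, and H a subgroup of G such that the quotient group G/H contains no elements of even order (equivalently, for g ∈ G, 2g ∈ H implies g ∈ H). Then the set X = C ∩ (H + x) is midconvex in G. -/
/-- A set of rationals is order-convex. -/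
def OrderConvexQ (C : Set ℚ) : Prop :=
  ∀ a ∈ C, ∀ b ∈ C, ∀ c : ℚ, a ≤ c → c ≤ b → c ∈ C

theorem stmt_8 (G : AddSubgroup ℚ) (C : Set ℚ) (hC : OrderConvexQ C)
    (x : ℚ) (hx : x ∈ G) (H : AddSubgroup ℚ) (hHG : H ≤ G)
    (h2 : ∀ g ∈ G, 2 • g ∈ H → g ∈ H) :
    ∀ u ∈ C ∩ ((· + x) '' (H : Set ℚ)), ∀ v ∈ C ∩ ((· + x) '' (H : Set ℚ)),
      ∀ z ∈ G, 2 • z = u + v → z ∈ C ∩ ((· + x) '' (H : Set ℚ)) := by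
  rintro u ⟨huC, h₁, h₁H, rfl⟩ v ⟨hvC, h₂, h₂H, rfl⟩ z hzG hz
  simp only [nsmul_eq_mul, Nat.cast_ofNat] at hz
  simp only at huC hvC
  constructor
  · rcases le_total (h₁ + x) (h₂ + x) with h | h
    · exact hC _ huC _ hvC z (by linarith) (by linarith)
    · exact hC _ hvC _ huC z (by linarith) (by linarith)
  · refine ⟨z - x, h2 _ (G.sub_mem hzG hx) ?_, by simp⟩
    have : (2 : ℕ) • (z - x) = h₁ + h₂ := by
      simp only [nsmul_eq_mul, Nat.cast_ofNat]; linarith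
    rw [this]; exact H.add_mem h₁H h₂H
end

section
/- Let G be a subgroup of ℚ. A nonempty set X ⊆ G is midconvex in G if and only if X = C ∩ (H + x) for some order-convex set C ⊆ ℚ, some x ∈ X, and some subgroup H of G such that the quotient group G/H contains no elements of even order. -/
def MidZ (Y : Set ℤ) : Prop := ∀ u ∈ Y, ∀ v ∈ Y, ∀ z : ℤ, 2 * z = u + v → z ∈ Y

lemma lemB (Y : Set ℤ) (hY : MidZ Y) (a b : ℤ) (ha : a ∈ Y) (hb : b ∈ Y)
    (hodd : Odd (b - a)) (hlt : a < b)
    (hempty : ∀ w ∈ Y, ¬ (a < w ∧ w < b)) :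
    ∀ v ∈ Y, (b - a) ∣ (v - a) := by
  have key : ∀ N : ℕ, ∀ v ∈ Y, (a - v).toNat + (v - b).toNat ≤ N → (b - a) ∣ (v - a) := by
    intro N
    induction N with
    | zero =>
      intro v hv hm
      have h1 : a ≤ v ∧ v ≤ b := by omega
      rcases eq_or_lt_of_le h1.1 with rfl | hav
      · exact ⟨0, by ring⟩
      rcases eq_or_lt_of_le h1.2 with rfl | hvb
      · exact ⟨1, by ring⟩
      exact absurd ⟨hav, hvb⟩ (hempty v hv)
    | succ N ih =>
      intro v hv hm
      rcases lt_trichotomy v a with hva | rfl | hav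
      · -- v < a
        have hpar : Even (a - v) ∨ Even (b - v) := by
          rcases Int.even_or_odd (a - v) with h | h
          · exact Or.inl h
          · right
            have heq : b - v = (b - a) + (a - v) := by ring
            rw [heq]; exact hodd.add_odd h
        obtain ⟨c, hcY, hc_ab, t, ht⟩ :
            ∃ c, c ∈ Y ∧ (c = a ∨ c = b) ∧ ∃ t, c - v = t + t := by
          rcases hpar with ⟨t, ht⟩ | ⟨t, ht⟩
          exacts [⟨a, ha, Or.inl rfl, t, ht⟩, ⟨b, hb, Or.inr rfl, t, ht⟩]
        have hca : a ≤ c := by rcases hc_ab with rfl | rfl <;> omega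
        have hcb : c ≤ b := by rcases hc_ab with rfl | rfl <;> omega
        set w := v + t with hwdef
        have hw : 2 * w = v + c := by omega
        have hwY : w ∈ Y := hY v hv c hcY w hw
        have hwb : w < b := by omega
        have hdvd_w : (b - a) ∣ (w - a) := by
          rcases le_or_gt a w with hge | hlt2
          · rcases eq_or_lt_of_le hge with heq | hlt3
            · exact ⟨0, by omega⟩
            · exact absurd ⟨hlt3, hwb⟩ (hempty w hwY)
          · exact ih w hwY (by omega)
        have hdvd_c : (b - a) ∣ (c - a) := by
          rcases hc_ab with rfl | rfl
          exacts [⟨0, by ring⟩, ⟨1, by ring⟩]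
        have heq : v - a = 2 * (w - a) - (c - a) := by omega
        rw [heq]
        exact dvd_sub (hdvd_w.mul_left 2) hdvd_c
      · exact ⟨0, by ring⟩
      · -- a < v
        rcases lt_trichotomy v b with hvb | rfl | hbv
        · exact absurd ⟨hav, hvb⟩ (hempty v hv)
        · exact ⟨1, by ring⟩
        · -- b < v
          have hpar : Even (v - a) ∨ Even (v - b) := by
            rcases Int.even_or_odd (v - b) with h | h
            · exact Or.inr h
            · left
              have heq : v - a = (b - a) + (v - b) := by ring
              rw [heq]; exact hodd.add_odd h
          obtain ⟨c, hcY, hc_ab, t, ht⟩ :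
              ∃ c, c ∈ Y ∧ (c = a ∨ c = b) ∧ ∃ t, v - c = t + t := by
            rcases hpar with ⟨t, ht⟩ | ⟨t, ht⟩
            exacts [⟨a, ha, Or.inl rfl, t, ht⟩, ⟨b, hb, Or.inr rfl, t, ht⟩]
          have hca : a ≤ c := by rcases hc_ab with rfl | rfl <;> omega
          have hcb : c ≤ b := by rcases hc_ab with rfl | rfl <;> omega
          set w := c + t with hwdef
          have hw : 2 * w = v + c := by omega
          have hwY : w ∈ Y := hY v hv c hcY w hw
          have hwa : a < w := by omega
          have hdvd_w : (b - a) ∣ (w - a) := by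
            rcases le_or_gt w b with hge | hlt2
            · rcases eq_or_lt_of_le hge with heq | hlt3
              · exact ⟨1, by omega⟩
              · exact absurd ⟨hwa, hlt3⟩ (hempty w hwY)
            · exact ih w hwY (by omega)
          have hdvd_c : (b - a) ∣ (c - a) := by
            rcases hc_ab with rfl | rfl
            exacts [⟨0, by ring⟩, ⟨1, by ring⟩]
          have heq : v - a = 2 * (w - a) - (c - a) := by omega
          rw [heq]
          exact dvd_sub (hdvd_w.mul_left 2) hdvd_c
  intro v hv
  exact key ((a - v).toNat + (v - b).toNat) v hv le_rfl


lemma lemZ (Y : Set ℤ) (hY : MidZ Y) (h0 : (0:ℤ) ∈ Y)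
    (g : ℤ) (k : ℕ) (hg : 2 ^ k * g ∈ AddSubgroup.closure Y)
    (a b : ℤ) (ha : a ∈ Y) (hb : b ∈ Y) (hag : a ≤ g) (hgb : g ≤ b) :
    g ∈ Y := by
  obtain ⟨m, hm⟩ := Int.subgroup_cyclic (AddSubgroup.closure Y)
  have hmem : ∀ y : ℤ, y ∈ AddSubgroup.closure Y → m ∣ y := by
    intro y hy
    rw [hm, AddSubgroup.mem_closure_singleton] at hy
    obtain ⟨n, hn⟩ := hy
    simp only [smul_eq_mul] at hn
    exact ⟨n, by rw [← hn]; ring⟩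
  by_cases hm0 : m = 0
  · have hz : ∀ y ∈ Y, y = 0 := by
      intro y hy
      have := hmem y (AddSubgroup.subset_closure hy)
      simpa [hm0] using this
    have ha0 := hz a ha
    have hb0 := hz b hb
    have : g = 0 := by omega
    rw [this]; exact h0
  have hmY : m ∈ AddSubgroup.closure Y := by
    rw [hm]; exact AddSubgroup.subset_closure rfl
  have hmodd : Odd m := by
    by_contra heven
    rw [Int.not_odd_iff_even] at heven
    have hpow : ∀ j : ℕ, ∀ y ∈ Y, (2 ^ j : ℤ) ∣ y := by
      intro j
      induction j with
      | zero => intro y _; simp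
      | succ j ih =>
        intro y hy
        have h2 : (2:ℤ) ∣ y := heven.two_dvd.trans (hmem y (AddSubgroup.subset_closure hy))
        obtain ⟨z, hz⟩ := h2
        have hzY : z ∈ Y := hY y hy 0 h0 z (by omega)
        obtain ⟨t, ht⟩ := ih z hzY
        exact ⟨t, by rw [hz, ht]; ring⟩
    have hdvdm : ∀ j : ℕ, (2 ^ j : ℤ) ∣ m := by
      intro j
      have hle : AddSubgroup.closure Y ≤ AddSubgroup.closure {(2 ^ j : ℤ)} := by
        rw [AddSubgroup.closure_le]
        intro y hy
        rw [SetLike.mem_coe, AddSubgroup.mem_closure_singleton]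
        obtain ⟨t, ht⟩ := hpow j y hy
        exact ⟨t, by simp only [smul_eq_mul]; rw [ht]; ring⟩
      have := hle hmY
      rw [AddSubgroup.mem_closure_singleton] at this
      obtain ⟨t, ht⟩ := this
      simp only [smul_eq_mul] at ht
      exact ⟨t, by rw [← ht]; ring⟩
    have h1 := hdvdm m.natAbs
    have h2 : (2:ℤ) ^ m.natAbs ≤ |m| := Int.le_of_dvd (abs_pos.2 hm0) ((dvd_abs _ _).2 h1)
    have h3 : (m.natAbs : ℤ) < 2 ^ m.natAbs := by
      exact_mod_cast (Nat.lt_two_pow_self (n := m.natAbs))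
    rw [Int.abs_eq_natAbs] at h2
    omega
  -- m ∣ g
  have hodd_dvd : ∀ y : ℤ, m ∣ 2 * y → m ∣ y := by
    intro y ⟨t, ht⟩
    rcases Int.even_or_odd t with ⟨s, hs⟩ | hoddt
    · refine ⟨s, ?_⟩
      have h2 : 2 * y = 2 * (m * s) := by rw [ht, hs]; ring
      omega
    · exfalso
      have : Odd (m * t) := hmodd.mul hoddt
      rw [← ht] at this
      exact (Int.not_odd_iff_even.mpr ⟨y, by ring⟩) this
  have hmg : m ∣ g := by
    have : ∀ j : ℕ, m ∣ 2 ^ j * g → m ∣ g := by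
      intro j
      induction j with
      | zero => simpa using id
      | succ j ih =>
        intro hj
        apply ih
        apply hodd_dvd
        have : 2 * (2 ^ j * g) = 2 ^ (j+1) * g := by ring
        rw [this]; exact hj
    exact this k (hmem _ hg)
  -- main induction
  have main : ∀ N : ℕ, ∀ a b : ℤ, a ∈ Y → b ∈ Y → a ≤ g → g ≤ b → (b - a).toNat ≤ N → g ∈ Y := by
    intro N
    induction N with
    | zero =>
      intro a b ha hb hag hgb hN
      have : g = a := by omega
      rw [this]; exact ha
    | succ N ih =>
      intro a b ha hb hag hgb hN
      rcases eq_or_lt_of_le hag with rfl | hag'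
      · exact ha
      rcases eq_or_lt_of_le hgb with rfl | hgb'
      · exact hb
      rcases Int.even_or_odd (b - a) with ⟨t, ht⟩ | hodd
      · -- even: midpoint
        have hw : 2 * (a + t) = a + b := by omega
        have hwY : (a + t) ∈ Y := hY a ha b hb _ hw
        rcases le_or_gt g (a + t) with h | h
        · exact ih a (a + t) ha hwY hag h (by omega)
        · exact ih (a + t) b hwY hb h.le hgb (by omega)
      · by_cases hex : ∃ w ∈ Y, a < w ∧ w < b
        · obtain ⟨w, hwY, hw1, hw2⟩ := hex
          rcases le_or_gt g w with h | h
          · exact ih a w ha hwY hag h (by omega)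
          · exact ih w b hwY hb h.le hgb (by omega)
        · exfalso
          push_neg at hex
          have hdvd := lemB Y hY a b ha hb hodd (by omega)
            (fun w hw => by
              intro ⟨h1, h2⟩
              exact absurd h2 (not_lt.mpr ((hex w hw h1)))) 
          have hba_a : (b - a) ∣ a := by
            have := hdvd 0 h0
            have h' : (b - a) ∣ -(0 - a) := dvd_neg.mpr this
            simpa using h'
          have hallY : ∀ v ∈ Y, (b - a) ∣ v := by
            intro v hv
            have h1 := hdvd v hv
            have : v = (v - a) + a := by ring
            rw [this]; exact dvd_add h1 hba_a
          have hbam : (b - a) ∣ m := by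
            have hle : AddSubgroup.closure Y ≤ AddSubgroup.closure {(b - a : ℤ)} := by
              rw [AddSubgroup.closure_le]
              intro y hy
              rw [SetLike.mem_coe, AddSubgroup.mem_closure_singleton]
              obtain ⟨t, ht⟩ := hallY y hy
              exact ⟨t, by simp only [smul_eq_mul]; rw [ht]; ring⟩
            have := hle hmY
            rw [AddSubgroup.mem_closure_singleton] at this
            obtain ⟨t, ht⟩ := this
            simp only [smul_eq_mul] at ht
            exact ⟨t, by rw [← ht]; ring⟩
          have hma : m ∣ a := hmem a (AddSubgroup.subset_closure ha)
          have hmga : m ∣ g - a := dvd_sub hmg hma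
          have h1 : (b - a) ≤ |m| := Int.le_of_dvd (abs_pos.2 hm0) ((dvd_abs _ _).2 hbam)
          have h2 : |m| ≤ g - a := Int.le_of_dvd (by omega) ((abs_dvd _ _).2 hmga)
          omega
  exact main (b - a).toNat a b ha hb hag hgb le_rfl


lemma exists_finset_closure {T : Set ℚ} {s : ℚ} (h : s ∈ AddSubgroup.closure T) :
    ∃ F : Finset ℚ, ↑F ⊆ T ∧ s ∈ AddSubgroup.closure (F : Set ℚ) := by
  refine AddSubgroup.closure_induction ?_ ?_ ?_ ?_ h
  · intro x hx
    exact ⟨{x}, by simpa using hx, AddSubgroup.subset_closure (by simp)⟩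
  · exact ⟨∅, by simp, zero_mem _⟩
  · rintro x y _ _ ⟨F1, hF1, hx1⟩ ⟨F2, hF2, hy2⟩
    refine ⟨F1 ∪ F2, ?_, ?_⟩
    · intro r hr
      simp only [Finset.coe_union, Set.mem_union] at hr
      rcases hr with h | h
      exacts [hF1 h, hF2 h]
    · have h1 : AddSubgroup.closure (F1 : Set ℚ) ≤ AddSubgroup.closure ((F1 ∪ F2 : Finset ℚ) : Set ℚ) :=
        AddSubgroup.closure_mono (by intro x hx; simp only [Finset.coe_union, Set.mem_union]; exact Or.inl hx)
      have h2 : AddSubgroup.closure (F2 : Set ℚ) ≤ AddSubgroup.closure ((F1 ∪ F2 : Finset ℚ) : Set ℚ) :=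
        AddSubgroup.closure_mono (by intro x hx; simp only [Finset.coe_union, Set.mem_union]; exact Or.inr hx)
      exact add_mem (h1 hx1) (h2 hy2)
  · rintro x _ ⟨F, hF, hx⟩
    exact ⟨F, hF, neg_mem hx⟩

lemma exists_gen (𝔉 : Finset ℚ) :
    ∃ c : ℚ, 0 ≤ c ∧ c ∈ AddSubgroup.closure (𝔉 : Set ℚ) ∧
      ∀ r ∈ 𝔉, ∃ n : ℤ, r = (n : ℚ) * c := by
  classical
  set N : ℤ := ∏ r ∈ 𝔉, (r.den : ℤ) with hN
  have hNpos : 0 < N := Finset.prod_pos (fun r _ => by positivity)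
  have hNQ : ((N : ℚ)) ≠ 0 := by
    have : N ≠ 0 := ne_of_gt hNpos
    exact_mod_cast this
  have hint : ∀ r ∈ 𝔉, ∃ p : ℤ, (p : ℚ) = r * N := by
    intro r hr
    have hdvd : (r.den : ℤ) ∣ N := Finset.dvd_prod_of_mem _ hr
    obtain ⟨t, ht⟩ := hdvd
    refine ⟨r.num * t, ?_⟩
    rw [ht]
    push_cast
    rw [← Rat.mul_den_eq_num r]
    ring
  set P : Set ℤ := {n : ℤ | ((n : ℚ) / N) ∈ 𝔉} with hP
  obtain ⟨gI, hgI⟩ := Int.subgroup_cyclic (AddSubgroup.closure P)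
  set ψ : ℤ →+ ℚ := AddMonoidHom.mk' (fun n => (n : ℚ) / N) (by intro u v; push_cast; ring) with hψ
  refine ⟨(|gI| : ℚ) / N, ?_, ?_, ?_⟩
  · positivity
  · -- membership
    have habs : |gI| ∈ AddSubgroup.closure P := by
      have hg : gI ∈ AddSubgroup.closure P := by
        rw [hgI]; exact AddSubgroup.subset_closure rfl
      rcases abs_cases gI with ⟨h, _⟩ | ⟨h, _⟩
      · rw [h]; exact hg
      · rw [h]; exact neg_mem hg
    have hmap : ψ |gI| ∈ AddSubgroup.map ψ (AddSubgroup.closure P) :=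
      AddSubgroup.mem_map_of_mem ψ habs
    rw [AddMonoidHom.map_closure] at hmap
    have hsub : ψ '' P ⊆ (𝔉 : Set ℚ) := by
      rintro r ⟨n, hn, rfl⟩
      exact hn
    have := AddSubgroup.closure_mono hsub hmap
    have hle : AddSubgroup.closure ((𝔉 : Finset ℚ) : Set ℚ) = AddSubgroup.closure (𝔉 : Set ℚ) := rfl
    simpa [hψ] using this
  · intro r hr
    obtain ⟨p, hp⟩ := hint r hr
    have hpP : p ∈ P := by
      have : ((p : ℚ) / N) = r := by rw [hp]; field_simp
      simp only [hP, Set.mem_setOf_eq, this]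
      exact hr
    have hpK : p ∈ AddSubgroup.closure P := AddSubgroup.subset_closure hpP
    rw [hgI, AddSubgroup.mem_closure_singleton] at hpK
    obtain ⟨n, hn⟩ := hpK
    simp only [smul_eq_mul] at hn
    -- gI ∣ p hence |gI| ∣ p
    have hdvd : |gI| ∣ p := (abs_dvd _ _).2 ⟨n, by rw [← hn]; ring⟩
    obtain ⟨n', hn'⟩ := hdvd
    refine ⟨n', ?_⟩
    have : r = (p : ℚ) / N := by rw [hp]; field_simp
    rw [this, hn']
    push_cast
    ring


theorem stmt_9 (G : AddSubgroup ℚ) (X : Set ℚ) (hXG : X ⊆ (G : Set ℚ))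
    (hne : X.Nonempty) :
    (∀ u ∈ X, ∀ v ∈ X, ∀ z ∈ G, 2 • z = u + v → z ∈ X) ↔
      ∃ (C : Set ℚ) (x : ℚ) (H : AddSubgroup ℚ),
        OrderConvexQ C ∧ x ∈ X ∧ H ≤ G ∧
        (∀ g ∈ G, 2 • g ∈ H → g ∈ H) ∧
        X = C ∩ ((· + x) '' (H : Set ℚ)) := by
  constructor
  · -- hard direction
    intro hmid
    obtain ⟨x, hxX⟩ := hne
    set S : AddSubgroup ℚ := AddSubgroup.closure ((fun y => y - x) '' X) with hS
    have hSmul : ∀ (j : ℕ) (s : ℚ), s ∈ S → (2:ℚ) ^ j * s ∈ S := by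
      intro j s hs
      have h1 : (2 ^ j : ℕ) • s ∈ S := AddSubgroup.nsmul_mem S hs (2 ^ j)
      have h2 : ((2 ^ j : ℕ) : ℚ) * s = (2:ℚ) ^ j * s := by push_cast; ring
      rwa [nsmul_eq_mul, h2] at h1
    refine ⟨{q : ℚ | ∃ a ∈ X, ∃ b ∈ X, a ≤ q ∧ q ≤ b}, x,
      { carrier := {q : ℚ | q ∈ G ∧ ∃ k : ℕ, (2:ℚ) ^ k * q ∈ S}
        add_mem' := ?_
        zero_mem' := ?_
        neg_mem' := ?_ }, ?_, ?_, ?_, ?_, ?_⟩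
    · rintro p q ⟨hpG, k1, h1⟩ ⟨hqG, k2, h2⟩
      refine ⟨add_mem hpG hqG, k1 + k2, ?_⟩
      have e : (2:ℚ) ^ (k1 + k2) * (p + q)
          = (2:ℚ) ^ k2 * ((2:ℚ) ^ k1 * p) + (2:ℚ) ^ k1 * ((2:ℚ) ^ k2 * q) := by ring
      rw [e]
      exact add_mem (hSmul k2 _ h1) (hSmul k1 _ h2)
    · exact ⟨zero_mem G, 0, by simpa using zero_mem S⟩
    · rintro q ⟨hqG, k, hk⟩
      refine ⟨neg_mem hqG, k, ?_⟩
      have e : (2:ℚ) ^ k * (-q) = -((2:ℚ) ^ k * q) := by ring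
      rw [e]
      exact neg_mem hk
    · -- order convex
      rintro p ⟨a, haX, b, hbX, hap, hpb⟩ q ⟨a', ha'X, b', hb'X, ha'q, hqb'⟩ r hpr hrq
      exact ⟨a, haX, b', hb'X, le_trans hap hpr, le_trans hrq hqb'⟩
    · exact hxX
    · rintro q ⟨hqG, _⟩; exact hqG
    · -- saturation
      rintro g hgG ⟨h2G, k, hk⟩
      refine ⟨hgG, k + 1, ?_⟩
      have e : (2:ℚ) ^ (k+1) * g = (2:ℚ) ^ k * (2 • g) := by
        rw [two_smul]; ring
      rw [e]
      exact hk
    · -- X = C ∩ (H + x)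
      ext q
      constructor
      · intro hq
        constructor
        · exact ⟨q, hq, q, hq, le_rfl, le_rfl⟩
        · refine ⟨q - x, ⟨sub_mem (hXG hq) (hXG hxX), 0, ?_⟩, ?_⟩
          · have hmem0 : q - x ∈ (fun y => y - x) '' X := ⟨q, hq, rfl⟩
            simpa using AddSubgroup.subset_closure hmem0
          · show q - x + x = q
            ring
      · rintro ⟨⟨a, haX, b, hbX, haq, hqb⟩, h, ⟨hhG, k, hk⟩, rfl⟩
        simp only at haq hqb ⊢
        by_cases hh0 : h = 0
        · rw [hh0, zero_add]; exact hxX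
        obtain ⟨F, hFsub, hFmem⟩ := exists_finset_closure hk
        classical
        set 𝔉 : Finset ℚ := insert (a - x) (insert (b - x) (insert h F)) with h𝔉
        obtain ⟨c, hc0, hcmem, hmul⟩ := exists_gen 𝔉
        have h𝔉G : (𝔉 : Set ℚ) ⊆ (G : Set ℚ) := by
          intro r hr
          simp only [h𝔉, Finset.coe_insert, Set.mem_insert_iff, Finset.mem_coe] at hr
          rcases hr with rfl | rfl | rfl | hrF
          · exact sub_mem (hXG haX) (hXG hxX)
          · exact sub_mem (hXG hbX) (hXG hxX)
          · exact hhG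
          · obtain ⟨y, hyX, rfl⟩ := hFsub hrF
            exact sub_mem (hXG hyX) (hXG hxX)
        have hcG : c ∈ G := (AddSubgroup.closure_le G).2 h𝔉G hcmem
        obtain ⟨na, hna⟩ := hmul (a - x) (by simp [h𝔉])
        obtain ⟨nb, hnb⟩ := hmul (b - x) (by simp [h𝔉])
        obtain ⟨nh, hnh⟩ := hmul h (by simp [h𝔉])
        have hcne : c ≠ 0 := by
          rintro rfl
          rw [mul_zero] at hnh
          exact hh0 hnh
        have hcpos : 0 < c := lt_of_le_of_ne hc0 (Ne.symm hcne)
        set Y : Set ℤ := {n : ℤ | (n : ℚ) * c + x ∈ X} with hYdef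
        have hYmid : MidZ Y := by
          intro u hu v hv z hz
          have hzG : (z : ℚ) * c + x ∈ G := by
            refine add_mem ?_ (hXG hxX)
            have := AddSubgroup.zsmul_mem G hcG z
            rwa [zsmul_eq_mul] at this
          refine hmid ((u:ℚ) * c + x) hu ((v:ℚ) * c + x) hv ((z:ℚ) * c + x) hzG ?_
          have hzq : (2:ℚ) * z = (u:ℚ) + v := by exact_mod_cast hz
          rw [two_smul]
          linear_combination c * hzq
        have h0Y : (0:ℤ) ∈ Y := by
          show ((0:ℤ):ℚ) * c + x ∈ X
          simpa using hxX
        have haY : na ∈ Y := by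
          show ((na:ℤ):ℚ) * c + x ∈ X
          rw [← hna]
          simpa using haX
        have hbY : nb ∈ Y := by
          show ((nb:ℤ):ℚ) * c + x ∈ X
          rw [← hnb]
          simpa using hbX
        have hclosZ : 2 ^ k * nh ∈ AddSubgroup.closure Y := by
          set φ : ℤ →+ ℚ := AddMonoidHom.mk' (fun n => (n : ℚ) * c)
            (by intro p q; push_cast; ring) with hφ
          have hmap : AddSubgroup.closure (F : Set ℚ)
              ≤ AddSubgroup.map φ (AddSubgroup.closure Y) := by
            rw [AddSubgroup.closure_le]
            intro r hr
            obtain ⟨n, hn⟩ := hmul r (by simp [h𝔉]; tauto)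
            obtain ⟨y, hyX, hyr⟩ := hFsub hr
            refine ⟨n, AddSubgroup.subset_closure ?_, by simp [hφ, ← hn]⟩
            show (n : ℚ) * c + x ∈ X
            have hyr' : y - x = r := hyr
            rw [← hn, ← hyr']
            simpa using hyX
          have hmem2 := hmap hFmem
          obtain ⟨w, hwmem, hw⟩ := hmem2
          have hwc : (w : ℚ) * c = ((2:ℚ) ^ k * nh) * c := by
            have : φ w = (2:ℚ) ^ k * h := hw
            simp only [hφ, AddMonoidHom.mk'_apply] at this
            rw [this, hnh]; ring
          have hwq : (w : ℚ) = (2:ℚ) ^ k * nh := mul_right_cancel₀ hcne hwc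
          have hwz : w = 2 ^ k * nh := by exact_mod_cast hwq
          rwa [hwz] at hwmem
        have hle1 : na ≤ nh := by
          have h1 : (na : ℚ) * c ≤ (nh : ℚ) * c := by
            rw [← hna, ← hnh]; linarith
          have h2 : (na : ℚ) ≤ (nh : ℚ) := le_of_mul_le_mul_right h1 hcpos
          exact_mod_cast h2
        have hle2 : nh ≤ nb := by
          have h1 : (nh : ℚ) * c ≤ (nb : ℚ) * c := by
            rw [← hnb, ← hnh]; linarith
          have h2 : (nh : ℚ) ≤ (nb : ℚ) := le_of_mul_le_mul_right h1 hcpos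
          exact_mod_cast h2
        have hfin := lemZ Y hYmid h0Y nh k hclosZ na nb haY hbY hle1 hle2
        have : (nh : ℚ) * c + x ∈ X := hfin
        rwa [← hnh] at this
  · -- easy direction
    rintro ⟨C, x, H, hC, hxX, hHG, hsat, hXeq⟩ u hu v hv z hzG hz
    rw [hXeq] at hu hv ⊢
    obtain ⟨huC, eu, huH, rfl⟩ := hu
    obtain ⟨hvC, ev, hvH, rfl⟩ := hv
    simp only at hz huC hvC ⊢
    rw [two_smul] at hz
    constructor
    · rcases le_total (eu + x) (ev + x) with huv | huv
      · exact hC _ huC _ hvC z (by linarith) (by linarith)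
      · exact hC _ hvC _ huC z (by linarith) (by linarith)
    · refine ⟨z - x, ?_, by simp⟩
      have hzx : z - x ∈ G := sub_mem hzG (hXG hxX)
      apply hsat (z - x) hzx
      have e : 2 • (z - x) = eu + ev := by
        rw [two_smul]; linarith
      rw [e]
      exact add_mem huH hvH
end

section
/- Let X be a midconvex subset of an abelian group G, x ∈ X, and g ∈ G. If the set Z = {n ∈ ℤ : x + n•g ∈ X} contains a nonzero element, then the nonzero element m of Z of smallest absolute value is odd. -/
theorem stmt_12 {G : Type*} [AddCommGroup G] (X : Set G) (hX : Midconvex X)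
    (x : G) (hx : x ∈ X) (g : G) (m : ℤ) (hm : m ≠ 0)
    (hmZ : x + m • g ∈ X)
    (hmin : ∀ n : ℤ, n ≠ 0 → x + n • g ∈ X → |m| ≤ |n|) :
    Odd m := by
  rcases Int.even_or_odd m with ⟨k, hk⟩ | h
  · exfalso
    have hk2 : m = 2 * k := by omega
    have hkX : x + k • g ∈ X := by
      apply hX x hx _ hmZ
      rw [hk2, mul_smul]
      abel
    have hk0 : k ≠ 0 := by omega
    have := hmin k hk0 hkX
    rw [hk2, abs_mul, abs_two] at this
    have := abs_pos.mpr hk0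
    omega
  · exact h
end

section
/- Let X be a midconvex subset of an abelian group G, x ∈ X, and a ∈ G an element of finite order with x + a ∈ X. Then x + n•a ∈ X for all n ∈ ℤ; that is, the entire coset x + ⟨a⟩ is contained in X. -/
lemma key_midconvex_int : ∀ m : ℕ, 0 < m → ∀ S : Set ℤ,
    (∀ u ∈ S, ∀ v ∈ S, ∀ z : ℤ, 2 * z = u + v → z ∈ S) →
    (∀ k : ℤ, k * m ∈ S) → (∀ k : ℤ, k * m + 1 ∈ S) →
    ∀ n : ℤ, n ∈ S := by
  intro m
  induction m using Nat.strong_induction_on with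
  | _ m IH =>
    intro hm S hmid h0 h1 n
    rcases Nat.even_or_odd m with he | ho
    · obtain ⟨m', rfl⟩ := he
      have hm' : 0 < m' := by omega
      refine IH m' (by omega) hm' S hmid ?_ ?_ n
      · intro k
        exact hmid _ (h0 k) _ (h0 0) _ (by push_cast; ring)
      · intro k
        exact hmid _ (h1 k) _ (h1 0) _ (by push_cast; ring)
    · obtain ⟨m', rfl⟩ := ho
      set M : ℕ := 2 * m' + 1 with hM
      set T : ℤ → Prop := fun r => ∀ k : ℤ, k * M + r ∈ S with hT
      have T0 : T 0 := fun k => by simpa using h0 k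
      have T1 : T 1 := fun k => h1 k
      have Tcong : ∀ u v : ℤ, u ≡ v [ZMOD (M : ℤ)] → T u → T v := by
        intro u v huv hTu k
        obtain ⟨c, hc⟩ := huv.dvd
        have : k * M + v = (k + c) * M + u := by
          have : v - u = (M : ℤ) * c := hc
          linarith [this]
        rw [this]; exact hTu (k + c)
      have Tmid : ∀ u v z : ℤ, T u → T v → 2 * z = u + v → T z := by
        intro u v z hTu hTv hz k
        have h1' : (2 * k) * M + u ∈ S := hTu (2 * k)
        have h2' : (0 : ℤ) * M + v ∈ S := hTv 0
        exact hmid _ h1' _ h2' _ (by linarith)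
      -- t is a half of 1 mod M
      set t : ℤ := (m' : ℤ) + 1 with ht
      have ht2 : (2 : ℤ) * t ≡ 1 [ZMOD (M : ℤ)] := by
        have hMt : (2 : ℤ) * t - 1 = (M : ℤ) := by push_cast [hM]; ring
        apply Int.modEq_iff_dvd.mpr
        rw [show (1 : ℤ) - 2 * t = -(M:ℤ) by linarith]
        exact dvd_neg.mpr dvd_rfl
      have C : ∀ j : ℕ, ∀ k : ℕ, k ≤ 2 ^ j → ∀ z : ℤ,
          (2 : ℤ) ^ j * z ≡ (k : ℤ) [ZMOD (M : ℤ)] → T z := by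
        intro j
        induction j with
        | zero =>
          intro k hk z hz
          simp only [pow_zero, one_mul] at hz
          interval_cases k
          · exact Tcong 0 z (by simpa using hz.symm) T0
          · exact Tcong 1 z (by simpa using hz.symm) T1
        | succ j IHj =>
          intro k hk z hz
          set k₁ : ℕ := min k (2 ^ j) with hk₁def
          set k₂ : ℕ := k - k₁ with hk₂def
          have hk₁ : k₁ ≤ 2 ^ j := min_le_right _ _
          have hk₂ : k₂ ≤ 2 ^ j := by
            have : k ≤ 2 ^ j + 2 ^ j := by
              have := hk; rw [pow_succ] at this; omega
            omega
          set z₁ : ℤ := (k₁ : ℤ) * t ^ j with hz₁def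
          have hz₁ : (2 : ℤ) ^ j * z₁ ≡ (k₁ : ℤ) [ZMOD (M : ℤ)] := by
            calc (2 : ℤ) ^ j * z₁ = (k₁ : ℤ) * (2 * t) ^ j := by
                  rw [hz₁def, mul_pow]; ring
              _ ≡ (k₁ : ℤ) * 1 ^ j [ZMOD (M : ℤ)] := Int.ModEq.mul_left _ (ht2.pow j)
              _ = (k₁ : ℤ) := by ring
          set z₂ : ℤ := 2 * z - z₁ with hz₂def
          have hz₂ : (2 : ℤ) ^ j * z₂ ≡ (k₂ : ℤ) [ZMOD (M : ℤ)] := by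
            calc (2 : ℤ) ^ j * z₂ = (2 : ℤ) ^ (j + 1) * z - (2 : ℤ) ^ j * z₁ := by
                  rw [hz₂def, pow_succ]; ring
              _ ≡ (k : ℤ) - (k₁ : ℤ) [ZMOD (M : ℤ)] := hz.sub hz₁
              _ = (k₂ : ℤ) := by
                  have : k₁ ≤ k := min_le_left _ _
                  push_cast [hk₂def]; omega
          exact Tmid z₁ z₂ z (IHj k₁ hk₁ z₁ hz₁) (IHj k₂ hk₂ z₂ hz₂) (by rw [hz₂def]; ring)
      -- Euler
      set j : ℕ := Nat.totient M with hj
      have hcop : Nat.Coprime 2 M := Nat.coprime_two_left.mpr ⟨m', rfl⟩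
      have heuler : (2 : ℕ) ^ j ≡ 1 [MOD M] := Nat.ModEq.pow_totient hcop
      have heulerZ : (2 : ℤ) ^ j ≡ 1 [ZMOD (M : ℤ)] := by
        have := Int.natCast_modEq_iff.mpr heuler
        push_cast at this
        exact this
      have hjpos : 1 ≤ j := Nat.totient_pos.mpr hm
      have hMle : (M : ℤ) ≤ 2 ^ j - 1 := by
        have hdvd : (M : ℤ) ∣ 2 ^ j - 1 := by
          have := heulerZ.dvd
          simpa using (Int.ModEq.dvd heulerZ.symm)
        have hpos : (0 : ℤ) < 2 ^ j - 1 := by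
          have : (2 : ℤ) ≤ 2 ^ j := by
            calc (2:ℤ) = 2^1 := by ring
              _ ≤ 2^j := by exact pow_le_pow_right₀ (by norm_num) hjpos
          linarith
        exact Int.le_of_dvd hpos hdvd
      set k : ℕ := (n % (M : ℤ)).toNat with hkdef
      have hMpos : (0 : ℤ) < (M : ℤ) := by exact_mod_cast hm
      have hmod1 : 0 ≤ n % (M : ℤ) := Int.emod_nonneg n (by positivity)
      have hmod2 : n % (M : ℤ) < M := Int.emod_lt_of_pos n hMpos
      have hkle : k ≤ 2 ^ j := by
        have : (k : ℤ) < (M : ℤ) := by rw [hkdef]; omega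
        have : (k : ℤ) ≤ 2 ^ j := by linarith [hMle]
        exact_mod_cast this
      have hcong : (2 : ℤ) ^ j * n ≡ (k : ℤ) [ZMOD (M : ℤ)] := by
        have h1'' : (2 : ℤ) ^ j * n ≡ 1 * n [ZMOD (M : ℤ)] := heulerZ.mul_right n
        have h2'' : n ≡ (k : ℤ) [ZMOD (M : ℤ)] := by
          have : (k : ℤ) = n % (M : ℤ) := by rw [hkdef]; omega
          rw [this]
          exact (Int.emod_emod_of_dvd n dvd_rfl).symm
        calc (2 : ℤ) ^ j * n ≡ 1 * n [ZMOD (M : ℤ)] := h1''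
          _ = n := by ring
          _ ≡ (k : ℤ) [ZMOD (M : ℤ)] := h2''
      have := C j k hkle n hcong 0
      simpa using this

theorem stmt_13 {G : Type*} [AddCommGroup G] (X : Set G) (hX : Midconvex X)
    (x : G) (hx : x ∈ X) (a : G) (hfin : ∃ m : ℕ, 0 < m ∧ m • a = 0)
    (ha : x + a ∈ X) :
    ∀ n : ℤ, x + n • a ∈ X := by
  obtain ⟨m, hm, hma⟩ := hfin
  have main := key_midconvex_int m hm {n : ℤ | x + n • a ∈ X} ?_ ?_ ?_
  · exact main
  · intro u hu v hv z hz
    simp only [Set.mem_setOf_eq] at *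
    apply hX _ hu _ hv
    rw [two_smul]
    have h2 : u • a + v • a = z • a + z • a := by
      rw [← add_zsmul, ← hz, mul_zsmul, two_zsmul]
    calc x + z • a + (x + z • a) = x + x + (z • a + z • a) := by abel
      _ = x + x + (u • a + v • a) := by rw [h2]
      _ = x + u • a + (x + v • a) := by abel
  · intro k
    have : ((k * (m : ℤ))) • a = 0 := by
      rw [mul_zsmul, natCast_zsmul, hma, smul_zero]
    simp only [Set.mem_setOf_eq, this, add_zero]
    exact hx
  · intro k
    have : ((k * (m : ℤ) + 1)) • a = a := by
      rw [add_zsmul, mul_zsmul, natCast_zsmul, hma, smul_zero, zero_add, one_zsmul]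
    simp only [Set.mem_setOf_eq, this]
    exact ha
end
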